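/- arXiv:2305.02672 — 2 statements merged into one kernel-verified Lean document; each statement's English description precedes it below -/
import Mathlib

section
/- Define s_R(n) = Σ_{i<0} d_i(n), the number of 1's in the fractional part of the canonical φ-representation of n. Then for every natural number n, s_R(n+1) − s_R(n) ∈ {−1, 0, 1}. -/
/-- The golden ratio φ = (1+√5)/2. -/
noncomputable def phi : ℝ := (1 + Real.sqrt 5) / 2

/-- `a` is a finite φ-representation of the real number `x`: a finitely supported
function `a : ℤ → {0,1}` with `x = Σ_{i ∈ ℤ} a(i) · φ^i`. -/
def IsPhiRep (x : ℝ) (a : ℤ →₀ ℕ) : Prop :=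
  (∀ i, a i ≤ 1) ∧ x = ∑ i ∈ a.support, (a i : ℝ) * phi ^ i

/-- `a` is the canonical φ-representation of `x`: a finite φ-representation with
no two adjacent digits equal to 1. -/
def IsCanonRep (x : ℝ) (a : ℤ →₀ ℕ) : Prop :=
  IsPhiRep x a ∧ ∀ i : ℤ, a i * a (i + 1) = 0

/-- `s_R(n)`, the number of 1's in the fractional part of the canonical
φ-representation `a` of `n`. -/
def sR (a : ℤ →₀ ℕ) : ℕ := ∑ i ∈ a.support.filter (fun i => i < 0), a i


open goldenRatio Real

/-! ### phi lemmas -/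

lemma phi_eq : phi = goldenRatio := rfl
lemma phi_pos : (0:ℝ) < phi := by rw [phi_eq]; exact goldenRatio_pos
lemma phi_ne : (phi:ℝ) ≠ 0 := ne_of_gt phi_pos
lemma phi_zpow_add_two (i : ℤ) : phi ^ (i+2) = phi ^ (i+1) + phi ^ i := by
  have h2 : phi ^ (2:ℤ) = phi + 1 := by
    rw [show (2:ℤ) = ((2:ℕ):ℤ) by rfl, zpow_natCast, phi_eq]; exact goldenRatio_sq
  rw [zpow_add₀ phi_ne i 2, h2, zpow_add₀ phi_ne i 1, zpow_one]; ring
lemma phi_zpow_pos (i : ℤ) : 0 < phi ^ i := zpow_pos phi_pos i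
lemma phi_zpow_lt {m n : ℤ} (h : m < n) : phi ^ m < phi ^ n := by
  rw [phi_eq]; exact zpow_lt_zpow_right₀ one_lt_goldenRatio h
lemma phi_zpow_le {m n : ℤ} (h : m ≤ n) : phi ^ m ≤ phi ^ n := by
  rw [phi_eq]; exact zpow_le_zpow_right₀ (le_of_lt one_lt_goldenRatio) h

/-! ### Lucas numbers -/

def Luc : ℕ → ℕ
  | 0 => 2
  | 1 => 1
  | (n+2) => Luc (n+1) + Luc n

lemma luc_pos : ∀ n, 0 < Luc n
  | 0 => by simp [Luc]
  | 1 => by simp [Luc]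
  | (n+2) => by rw [Luc]; have := luc_pos (n+1); omega

lemma luc_rec (n : ℕ) : Luc (n+2) = Luc (n+1) + Luc n := rfl

lemma luc_succ_lt : ∀ n, 1 ≤ n → Luc n < Luc (n+1)
  | 0, h => by omega
  | 1, _ => by simp [Luc]
  | (n+2), _ => by
      have e : Luc (n+2+1) = Luc (n+2) + Luc (n+1) := rfl
      have := luc_pos (n+1); omega

lemma luc_mono {m n : ℕ} (h1 : 1 ≤ m) (h : m < n) : Luc m < Luc n := by
  induction n with
  | zero => omega
  | succ n ih =>
    rcases Nat.lt_or_ge m n with h'|h'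
    · exact lt_trans (ih h') (luc_succ_lt n (by omega))
    · have : m = n := by omega
      subst this; exact luc_succ_lt m h1

lemma luc_mono_le {m n : ℕ} (h1 : 1 ≤ m) (h : m ≤ n) : Luc m ≤ Luc n := by
  rcases Nat.eq_or_lt_of_le h with h'|h'
  · rw [h']
  · exact le_of_lt (luc_mono h1 h')

lemma luc_ge_three {n : ℕ} (h : 2 ≤ n) : 3 ≤ Luc n := by
  have : Luc 2 ≤ Luc n := luc_mono_le (by omega) h
  simpa [Luc] using this

lemma luc_one : Luc 1 = 1 := rfl
lemma luc_two : Luc 2 = 3 := rfl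
lemma luc_three : Luc 3 = 4 := rfl

lemma luc_phi : ∀ n : ℕ, (Luc n : ℝ) = phi ^ (n:ℤ) + (-1)^n * phi ^ (-(n:ℤ))
  | 0 => by norm_num [Luc]
  | 1 => by
    have h := phi_zpow_add_two (-1)
    rw [show ((-1:ℤ)+2) = 1 by ring, show ((-1:ℤ)+1) = 0 by ring, zpow_zero] at h
    have hl : (Luc 1 : ℝ) = 1 := by norm_num [Luc]
    rw [hl, pow_one]
    push_cast
    linarith [h]
  | (n+2) => by
    have h1 := luc_phi (n+1)
    have h0 := luc_phi n
    have e1 := phi_zpow_add_two (n:ℤ)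
    have e2 : phi ^ (-(n:ℤ)) = phi ^ (-((n:ℤ)+1)) + phi ^ (-((n:ℤ)+2)) := by
      have h := phi_zpow_add_two (-(n:ℤ)-2)
      rw [show -(n:ℤ)-2+2 = -(n:ℤ) by ring, show -(n:ℤ)-2+1 = -((n:ℤ)+1) by ring,
        show -(n:ℤ)-2 = -((n:ℤ)+2) by ring] at h
      linarith
    rw [luc_rec]
    push_cast at h1 h0 ⊢
    rw [h1, h0]
    linear_combination (-1 : ℝ) * e1 + ((-1:ℝ)^n) * e2

/-- even case : Luc (2k) = φ^{2k} + φ^{-2k} -/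
lemma luc_phi_even (k : ℕ) : (Luc (2*k) : ℝ) = phi ^ ((2*k:ℕ):ℤ) + phi ^ (-((2*k:ℕ):ℤ)) := by
  have h := luc_phi (2*k)
  have e : ((-1:ℝ))^(2*k) = 1 := by rw [pow_mul]; norm_num
  rw [e, one_mul] at h
  exact h

/-- odd case : Luc (2k+1) = φ^{2k+1} - φ^{-(2k+1)} -/
lemma luc_phi_odd (k : ℕ) : (Luc (2*k+1) : ℝ) = phi ^ ((2*k+1:ℕ):ℤ) - phi ^ (-((2*k+1:ℕ):ℤ)) := by
  have h := luc_phi (2*k+1)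
  have e : ((-1:ℝ))^(2*k+1) = -1 := by rw [pow_succ, pow_mul]; norm_num
  rw [e] at h
  rw [h]; ring

/-! ### the construction -/

lemma luc_ge_lin (k : ℕ) : k + 3 ≤ Luc (2*k+2) := by
  induction k with
  | zero => simp [Luc]
  | succ k ih =>
    have e : Luc (2*(k+1)+2) = Luc (2*k+3) + Luc (2*k+2) := rfl
    have : 0 < Luc (2*k+3) := luc_pos _
    omega

lemma exists_kOf (n : ℕ) : ∃ k, n < Luc (2*k+2) := ⟨n, by have := luc_ge_lin n; omega⟩

def kOf (n : ℕ) : ℕ := Nat.find (exists_kOf n)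

def F : ℕ → ℕ → Finset ℤ
  | 0, n =>
    if n = 0 then ∅
    else if n = 1 then {0}
    else if n = 2 then {1, -2}
    else
      let k := kOf n
      if n ≤ Luc (2*k+1) then {(2*k : ℤ), -(2*k : ℤ)} ∪ F 0 (n - Luc (2*k))
      else {(2*k+1 : ℤ), -(2*k+2 : ℤ)} ∪ F k (n - Luc (2*k+1))
  | (k+1), m =>
    if k = 0 then (if m = 1 then {-1} else {1})
    else
      if m < Luc (2*k) then insert (-(2*k+1 : ℤ)) (F k m)
      else if m ≤ Luc (2*k+1) then {(2*k : ℤ), -(2*k+1 : ℤ)} ∪ F 0 (m - Luc (2*k))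
      else insert ((2*k+1 : ℤ)) (F k (m - Luc (2*k+1)))
  termination_by k m => (m, k)
  decreasing_by
  · exact Prod.Lex.left _ _ (by have := luc_pos (2 * kOf n); omega)
  · exact Prod.Lex.left _ _ (by have := luc_pos (2 * kOf n + 1); omega)
  · exact Prod.Lex.right _ (by omega)
  · exact Prod.Lex.left _ _ (by have := luc_pos (2*k); omega)
  · exact Prod.Lex.left _ _ (by have := luc_pos (2*k+1); omega)

lemma kOf_eq {k n : ℕ} (h1 : Luc (2*k) ≤ n) (h2 : n < Luc (2*k+2)) :
    kOf n = k := by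
  have hle : kOf n ≤ k := Nat.find_le h2
  rcases Nat.eq_or_lt_of_le hle with h'|h'
  · exact h'
  · exfalso
    have hspec : n < Luc (2 * kOf n + 2) := Nat.find_spec (exists_kOf n)
    have hmono : Luc (2 * kOf n + 2) ≤ Luc (2*k) := luc_mono_le (by omega) (by omega)
    omega

lemma F0_zero : F 0 0 = ∅ := by rw [F]; norm_num
lemma F0_one : F 0 1 = {0} := by rw [F]; norm_num
lemma F0_two : F 0 2 = {1, -2} := by rw [F]; norm_num

lemma F_R2 {k n : ℕ} (hk : 1 ≤ k) (h1 : Luc (2*k) ≤ n) (h2 : n ≤ Luc (2*k+1)) :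
    F 0 n = {(2*k : ℤ), -(2*k : ℤ)} ∪ F 0 (n - Luc (2*k)) := by
  have h3 : Luc (2*k+1) < Luc (2*k+2) := luc_succ_lt _ (by omega)
  have hke : kOf n = k := kOf_eq h1 (by omega)
  have hn3 : 3 ≤ n := le_trans (luc_ge_three (by omega)) h1
  conv_lhs => rw [F]
  simp only [hke]
  rw [if_neg (by omega), if_neg (by omega), if_neg (by omega), if_pos h2]

lemma F_R3 {k n : ℕ} (hk : 1 ≤ k) (h1 : Luc (2*k+1) < n) (h2 : n < Luc (2*k+2)) :
    F 0 n = {(2*k+1 : ℤ), -(2*k+2 : ℤ)} ∪ F k (n - Luc (2*k+1)) := by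
  have h0 : Luc (2*k) ≤ Luc (2*k+1) := luc_mono_le (by omega) (by omega)
  have hke : kOf n = k := kOf_eq (by omega) h2
  have hn3 : 3 ≤ n := by have := luc_ge_three (show 2 ≤ 2*k+1 by omega); omega
  conv_lhs => rw [F]
  simp only [hke]
  rw [if_neg (by omega), if_neg (by omega), if_neg (by omega), if_neg (by omega)]

lemma F_G1_one : F 1 1 = {-1} := by rw [F]; norm_num
lemma F_G1_two : F 1 2 = {1} := by rw [F]; norm_num

lemma F_G2 {k m : ℕ} (hk : 1 ≤ k) (hm : m < Luc (2*k)) :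
    F (k+1) m = insert (-(2*k+1 : ℤ)) (F k m) := by
  conv_lhs => rw [F]
  rw [if_neg (by omega), if_pos hm]

lemma F_G3 {k m : ℕ} (hk : 1 ≤ k) (h1 : Luc (2*k) ≤ m) (h2 : m ≤ Luc (2*k+1)) :
    F (k+1) m = {(2*k : ℤ), -(2*k+1 : ℤ)} ∪ F 0 (m - Luc (2*k)) := by
  conv_lhs => rw [F]
  rw [if_neg (by omega), if_neg (by omega), if_pos h2]

lemma F_G4 {k m : ℕ} (hk : 1 ≤ k) (h1 : Luc (2*k+1) < m) :
    F (k+1) m = insert ((2*k+1 : ℤ)) (F k (m - Luc (2*k+1))) := by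
  have h0 : Luc (2*k) ≤ Luc (2*k+1) := luc_mono_le (by omega) (by omega)
  conv_lhs => rw [F]
  rw [if_neg (by omega), if_neg (by omega), if_neg (by omega)]

/-! ### values and canonicity of finsets -/

noncomputable def pval (S : Finset ℤ) : ℝ := ∑ i ∈ S, phi ^ i

def Canon (S : Finset ℤ) : Prop := ∀ i ∈ S, i + 1 ∉ S

lemma pval_empty : pval ∅ = 0 := rfl
lemma pval_singleton (a : ℤ) : pval {a} = phi ^ a := Finset.sum_singleton _ _
lemma pval_insert {a : ℤ} {S : Finset ℤ} (ha : a ∉ S) :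
    pval (insert a S) = phi ^ a + pval S := Finset.sum_insert ha
lemma pval_pair_union {a b : ℤ} {S : Finset ℤ} (hab : a ≠ b) (ha : a ∉ S) (hb : b ∉ S) :
    pval ({a, b} ∪ S) = phi ^ a + phi ^ b + pval S := by
  have h1 : ({a, b} : Finset ℤ) ∪ S = insert a (insert b S) := by
    ext x; simp [or_assoc]
  rw [pval, h1, Finset.sum_insert (by simp [ha, hab]), Finset.sum_insert hb]
  rw [pval]; ring

lemma phi_split (i : ℤ) : phi ^ i = phi ^ (i-1) + phi ^ (i-2) := by
  have := phi_zpow_add_two (i-2)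
  rw [show i-2+2 = i by ring, show i-2+1 = i-1 by ring] at this
  exact this

lemma luc_phi_even' (k : ℕ) : phi ^ (2*(k:ℤ)) + phi ^ (-(2*(k:ℤ))) = (Luc (2*k) : ℝ) := by
  have e : ((2*k:ℕ):ℤ) = 2*(k:ℤ) := by push_cast; ring
  rw [luc_phi_even k, e]

lemma luc_phi_odd' (k : ℕ) :
    phi ^ (2*(k:ℤ)+1) = (Luc (2*k+1) : ℝ) + phi ^ (-(2*(k:ℤ)+1)) := by
  have e : ((2*k+1:ℕ):ℤ) = 2*(k:ℤ)+1 := by push_cast; ring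
  rw [luc_phi_odd k, e]; ring

/-! ### the main specification -/

theorem spec (k m : ℕ) :
    (k = 0 → pval (F 0 m) = m ∧ Canon (F 0 m) ∧
      ∀ j : ℕ, m ≤ Luc (2*j+1) → ∀ i ∈ F 0 m, -(2*(j:ℤ)) ≤ i ∧ i ≤ 2*(j:ℤ)) ∧
    (1 ≤ k → 1 ≤ m → m < Luc (2*k) →
      pval (F k m) = m - phi ^ (-(2*(k:ℤ))) ∧ Canon (F k m) ∧
      ∀ i ∈ F k m, -(2*(k:ℤ))+1 ≤ i ∧ i ≤ 2*(k:ℤ)-1) := by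
  constructor
  · rintro rfl
    -- part A : F 0 m
    by_cases h0 : m = 0
    · subst h0
      refine ⟨by simp [F0_zero, pval_empty], by simp [Canon, F0_zero], by simp [F0_zero]⟩
    by_cases h1 : m = 1
    · subst h1
      refine ⟨by simp [F0_one, pval_singleton], ?_, ?_⟩
      · intro i hi; simp [F0_one] at hi; subst hi; simp [F0_one]
      · intro j hj i hi; simp [F0_one] at hi; subst hi; constructor <;> omega
    by_cases h2 : m = 2
    · subst h2
      have hval : pval (F 0 2) = 2 := by
        rw [F0_two]
        have : pval {(1:ℤ), -2} = phi ^ (1:ℤ) + phi ^ (-2:ℤ) := by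
          rw [pval, Finset.sum_insert (by norm_num), Finset.sum_singleton]
        rw [this]
        have e1 := phi_split 1
        have e0 := phi_split 0
        rw [show (1:ℤ)-1 = 0 by ring, show (1:ℤ)-2 = -1 by ring, zpow_zero] at e1
        rw [show (0:ℤ)-1 = -1 by ring, show (0:ℤ)-2 = -2 by ring, zpow_zero] at e0
        linarith
      refine ⟨hval, ?_, ?_⟩
      · intro i hi; simp [F0_two] at hi ⊢
        rcases hi with rfl|rfl <;> norm_num
      · intro j hj i hi
        have hj1 : 1 ≤ j := by
          by_contra h
          have : j = 0 := by omega
          subst this; simp [Luc] at hj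
        simp [F0_two] at hi
        rcases hi with rfl|rfl <;> constructor <;> omega
    -- m ≥ 3
    have hm3 : 3 ≤ m := by omega
    -- facts about kOf m
    have hspec : m < Luc (2 * kOf m + 2) := Nat.find_spec (exists_kOf m)
    have hk1 : 1 ≤ kOf m := by
      by_contra h
      have h' : kOf m = 0 := by omega
      rw [h'] at hspec; rw [luc_two] at hspec; omega
    have hlow : Luc (2 * kOf m) ≤ m := by
      by_contra h
      have := Nat.find_min (exists_kOf m) (show kOf m - 1 < kOf m by omega)
      have e : 2 * (kOf m - 1) + 2 = 2 * kOf m := by omega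
      rw [e] at this; omega
    obtain ⟨k₀, hk₀⟩ : ∃ k₀, kOf m = k₀ + 1 := ⟨kOf m - 1, by omega⟩
    set K := kOf m with hK
    by_cases hcase : m ≤ Luc (2*K+1)
    · -- R2
      have hrec := F_R2 hk1 hlow hcase
      set m' := m - Luc (2*K) with hm'
      have hm'lt : m' < m := by have := luc_pos (2*K); omega
      have IH := (spec 0 m').1 rfl
      obtain ⟨ihv, ihc, ihb⟩ := IH
      have hm'le : m' ≤ Luc (2*(K-1)+1) := by
        have e : 2*K+1 = (2*(K-1)+1)+2 := by omega
        rw [e, luc_rec] at hcase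
        have e2 : 2*(K-1)+1+1 = 2*K := by omega
        rw [e2] at hcase
        omega
      have hb' := ihb (K-1) hm'le
      have hcast : ((K-1:ℕ):ℤ) = (K:ℤ)-1 := by omega
      -- membership bounds for F 0 m'
      have hbnd : ∀ i ∈ F 0 m', -(2*(K:ℤ))+2 ≤ i ∧ i ≤ 2*(K:ℤ)-2 := by
        intro i hi
        have := hb' i hi
        rw [hcast] at this
        constructor <;> [linarith [this.1]; linarith [this.2]]
      have hne : ((2*K:ℤ)) ≠ -(2*(K:ℤ)) := by
        have : (1:ℤ) ≤ (K:ℤ) := by exact_mod_cast hk1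
        omega
      have hnotmem1 : (2*(K:ℤ)) ∉ F 0 m' := by
        intro h; have := (hbnd _ h).2; omega
      have hnotmem2 : (-(2*(K:ℤ))) ∉ F 0 m' := by
        intro h; have := (hbnd _ h).1
        have : (1:ℤ) ≤ (K:ℤ) := by exact_mod_cast hk1
        omega
      refine ⟨?_, ?_, ?_⟩
      · rw [hrec, pval_pair_union hne hnotmem1 hnotmem2, ihv, luc_phi_even']
        have : ((m':ℕ):ℝ) = (m:ℝ) - (Luc (2*K) : ℝ) := by
          rw [hm']; push_cast [Nat.cast_sub hlow]; ring
        rw [this]; ring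
      · intro i hi
        rw [hrec] at hi ⊢
        simp only [Finset.mem_union, Finset.mem_insert, Finset.mem_singleton] at hi ⊢
        have hK1 : (1:ℤ) ≤ (K:ℤ) := by exact_mod_cast hk1
        rcases hi with (rfl|rfl)|hi
        · push_neg
          refine ⟨⟨by omega, by omega⟩, ?_⟩
          intro h; have := (hbnd _ h).2; omega
        · push_neg
          refine ⟨⟨by omega, by omega⟩, ?_⟩
          intro h; have := (hbnd _ h).1; omega
        · have hb := hbnd _ hi
          push_neg
          refine ⟨⟨by omega, by omega⟩, ?_⟩
          intro h
          exact ihc i hi h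
      · intro j hj i hi
        -- show j ≥ K
        have hjK : K ≤ j := by
          by_contra h
          have h2 : 2*j+1 < 2*K := by omega
          have := luc_mono (show 1 ≤ 2*j+1 by omega) h2
          omega
        have hjK' : (K:ℤ) ≤ (j:ℤ) := by exact_mod_cast hjK
        rw [hrec] at hi
        simp only [Finset.mem_union, Finset.mem_insert, Finset.mem_singleton] at hi
        rcases hi with (rfl|rfl)|hi
        · constructor <;> omega
        · constructor <;> omega
        · have := hbnd _ hi; constructor <;> omega
    · -- R3
      push_neg at hcase
      have hrec := F_R3 hk1 hcase hspec
      set m' := m - Luc (2*K+1) with hm'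
      have hm'1 : 1 ≤ m' := by omega
      have hm'lt : m' < m := by have := luc_pos (2*K+1); omega
      have hm'K : m' < Luc (2*K) := by
        have e : Luc (2*K+2) = Luc (2*K+1) + Luc (2*K) := luc_rec _
        omega
      have IH := (spec K m').2 hk1 hm'1 hm'K
      obtain ⟨ihv, ihc, ihb⟩ := IH
      have hK1 : (1:ℤ) ≤ (K:ℤ) := by exact_mod_cast hk1
      have hnotmem1 : (2*(K:ℤ)+1) ∉ F K m' := by
        intro h; have := (ihb _ h).2; omega
      have hnotmem2 : (-(2*(K:ℤ)+2)) ∉ F K m' := by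
        intro h; have := (ihb _ h).1; omega
      have hne : (2*(K:ℤ)+1) ≠ -(2*(K:ℤ)+2) := by omega
      refine ⟨?_, ?_, ?_⟩
      · rw [hrec, pval_pair_union hne hnotmem1 hnotmem2, ihv, luc_phi_odd']
        have hmc : ((m':ℕ):ℝ) = (m:ℝ) - (Luc (2*K+1) : ℝ) := by
          rw [hm']; push_cast [Nat.cast_sub (le_of_lt hcase)]; ring
        rw [hmc]
        have hsplit := phi_split (-(2*(K:ℤ)))
        rw [show -(2*(K:ℤ))-1 = -(2*(K:ℤ)+1) by ring, show -(2*(K:ℤ))-2 = -(2*(K:ℤ)+2) by ring]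
          at hsplit
        linarith
      · intro i hi
        rw [hrec] at hi ⊢
        simp only [Finset.mem_union, Finset.mem_insert, Finset.mem_singleton] at hi ⊢
        rcases hi with (rfl|rfl)|hi
        · push_neg
          refine ⟨⟨by omega, by omega⟩, ?_⟩
          intro h; have := (ihb _ h).2; omega
        · push_neg
          refine ⟨⟨by omega, by omega⟩, ?_⟩
          intro h; have := (ihb _ h).1; omega
        · have hb := ihb _ hi
          push_neg
          refine ⟨⟨by omega, by omega⟩, ?_⟩
          intro h
          exact ihc i hi h
      · intro j hj i hi
        have hjK : K + 1 ≤ j := by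
          by_contra h
          have h2 : 2*j+1 ≤ 2*K+1 := by omega
          have := luc_mono_le (show 1 ≤ 2*j+1 by omega) h2
          omega
        have hjK' : (K:ℤ)+1 ≤ (j:ℤ) := by exact_mod_cast hjK
        rw [hrec] at hi
        simp only [Finset.mem_union, Finset.mem_insert, Finset.mem_singleton] at hi
        rcases hi with (rfl|rfl)|hi
        · constructor <;> omega
        · constructor <;> omega
        · have := ihb _ hi; constructor <;> omega
  · -- part B : F k m  (gamma)
    intro hk hm1 hmlt
    obtain ⟨k₀, rfl⟩ : ∃ k₀, k = k₀ + 1 := ⟨k - 1, by omega⟩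
    by_cases hkk : k₀ = 0
    · subst hkk
      rw [luc_two] at hmlt
      by_cases hm1' : m = 1
      · subst hm1'
        refine ⟨?_, ?_, ?_⟩
        · rw [F_G1_one, pval_singleton]
          have h := phi_split 0
          rw [show (0:ℤ)-1 = -1 by ring, show (0:ℤ)-2 = -2 by ring, zpow_zero] at h
          push_cast
          linarith
        · intro i hi; simp [F_G1_one] at hi; subst hi; simp [F_G1_one]
        · intro i hi; simp [F_G1_one] at hi; subst hi
          constructor <;> [push_cast; push_cast] <;> omega
      · have hm2 : m = 2 := by omega
        subst hm2
        refine ⟨?_, ?_, ?_⟩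
        · rw [F_G1_two, pval_singleton]
          have e1 := phi_split 1
          have e0 := phi_split 0
          rw [show (1:ℤ)-1 = 0 by ring, show (1:ℤ)-2 = -1 by ring, zpow_zero] at e1
          rw [show (0:ℤ)-1 = -1 by ring, show (0:ℤ)-2 = -2 by ring, zpow_zero] at e0
          push_cast
          linarith
        · intro i hi; simp [F_G1_two] at hi; subst hi; simp [F_G1_two]
        · intro i hi; simp [F_G1_two] at hi; subst hi
          constructor <;> push_cast <;> omega
    · have hk₀ : 1 ≤ k₀ := by omega
      have hK1 : (1:ℤ) ≤ (k₀:ℤ) := by exact_mod_cast hk₀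
      rcases Nat.lt_or_ge m (Luc (2*k₀)) with hG2|hrest
      · -- G2
        have hrec := F_G2 hk₀ hG2
        have IH := (spec k₀ m).2 hk₀ hm1 hG2
        obtain ⟨ihv, ihc, ihb⟩ := IH
        have hnotmem : (-(2*(k₀:ℤ)+1)) ∉ F k₀ m := by
          intro h; have := (ihb _ h).1; omega
        refine ⟨?_, ?_, ?_⟩
        · rw [hrec, pval_insert hnotmem, ihv]
          have hsplit := phi_split (-(2*(k₀:ℤ)))
          rw [show -(2*(k₀:ℤ))-1 = -(2*(k₀:ℤ)+1) by ring,
            show -(2*(k₀:ℤ))-2 = -(2*(k₀:ℤ)+2) by ring] at hsplit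
          push_cast
          rw [show -(2*((k₀:ℤ)+1)) = -(2*(k₀:ℤ)+2) by ring]
          linarith
        · intro i hi
          rw [hrec] at hi ⊢
          simp only [Finset.mem_insert] at hi ⊢
          rcases hi with rfl|hi
          · push_neg
            refine ⟨by omega, ?_⟩
            intro h; have := (ihb _ h).1; omega
          · have hb := ihb _ hi
            push_neg
            refine ⟨by omega, fun h => ihc i hi h⟩
        · intro i hi
          rw [hrec] at hi
          simp only [Finset.mem_insert] at hi
          push_cast
          rcases hi with rfl|hi
          · constructor <;> omega
          · have := ihb _ hi; constructor <;> omega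
      · rcases le_or_gt m (Luc (2*k₀+1)) with hG3|hG4
        · -- G3
          have hrec := F_G3 hk₀ hrest hG3
          set j := m - Luc (2*k₀) with hj
          have hjlt : j < m := by have := luc_ge_three (show 2 ≤ 2*k₀ by omega); omega
          have IH := (spec 0 j).1 rfl
          obtain ⟨ihv, ihc, ihb⟩ := IH
          have hjle : j ≤ Luc (2*(k₀-1)+1) := by
            have e : 2*k₀+1 = (2*(k₀-1)+1)+2 := by omega
            rw [e, luc_rec] at hG3
            have e2 : 2*(k₀-1)+1+1 = 2*k₀ := by omega
            rw [e2] at hG3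
            omega
          have hb' := ihb (k₀-1) hjle
          have hcast : ((k₀-1:ℕ):ℤ) = (k₀:ℤ)-1 := by omega
          have hbnd : ∀ i ∈ F 0 j, -(2*(k₀:ℤ))+2 ≤ i ∧ i ≤ 2*(k₀:ℤ)-2 := by
            intro i hi
            have := hb' i hi
            rw [hcast] at this
            constructor <;> [linarith [this.1]; linarith [this.2]]
          have hne : ((2*(k₀:ℤ))) ≠ -(2*(k₀:ℤ)+1) := by omega
          have hnm1 : (2*(k₀:ℤ)) ∉ F 0 j := by
            intro h; have := (hbnd _ h).2; omega
          have hnm2 : (-(2*(k₀:ℤ)+1)) ∉ F 0 j := by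
            intro h; have := (hbnd _ h).1; omega
          refine ⟨?_, ?_, ?_⟩
          · rw [hrec, pval_pair_union hne hnm1 hnm2, ihv]
            have hmc : ((j:ℕ):ℝ) = (m:ℝ) - (Luc (2*k₀) : ℝ) := by
              rw [hj]; push_cast [Nat.cast_sub hrest]; ring
            rw [hmc]
            have heven := luc_phi_even' k₀
            have hsplit := phi_split (-(2*(k₀:ℤ)))
            rw [show -(2*(k₀:ℤ))-1 = -(2*(k₀:ℤ)+1) by ring,
              show -(2*(k₀:ℤ))-2 = -(2*(k₀:ℤ)+2) by ring] at hsplit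
            push_cast
            rw [show -(2*((k₀:ℤ)+1)) = -(2*(k₀:ℤ)+2) by ring]
            linarith
          · intro i hi
            rw [hrec] at hi ⊢
            simp only [Finset.mem_union, Finset.mem_insert, Finset.mem_singleton] at hi ⊢
            rcases hi with (rfl|rfl)|hi
            · push_neg
              refine ⟨⟨by omega, by omega⟩, ?_⟩
              intro h; have := (hbnd _ h).2; omega
            · push_neg
              refine ⟨⟨by omega, by omega⟩, ?_⟩
              intro h; have := (hbnd _ h).1; omega
            · have hb := hbnd _ hi
              push_neg
              refine ⟨⟨by omega, by omega⟩, fun h => ihc i hi h⟩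
          · intro i hi
            rw [hrec] at hi
            simp only [Finset.mem_union, Finset.mem_insert, Finset.mem_singleton] at hi
            push_cast
            rcases hi with (rfl|rfl)|hi
            · constructor <;> omega
            · constructor <;> omega
            · have := hbnd _ hi; constructor <;> omega
        · -- G4
          have hrec := F_G4 hk₀ hG4
          set j := m - Luc (2*k₀+1) with hj
          have hj1 : 1 ≤ j := by omega
          have hjlt : j < m := by have := luc_pos (2*k₀+1); omega
          have hjK : j < Luc (2*k₀) := by
            have e : 2*(k₀+1) = (2*k₀+1)+1 := by omega
            rw [e] at hmlt
            have e2 : Luc (2*k₀+1+1) = Luc (2*k₀+1) + Luc (2*k₀) := luc_rec _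
            omega
          have IH := (spec k₀ j).2 hk₀ hj1 hjK
          obtain ⟨ihv, ihc, ihb⟩ := IH
          have hnotmem : ((2*(k₀:ℤ)+1)) ∉ F k₀ j := by
            intro h; have := (ihb _ h).2; omega
          refine ⟨?_, ?_, ?_⟩
          · rw [hrec, pval_insert hnotmem, ihv]
            have hmc : ((j:ℕ):ℝ) = (m:ℝ) - (Luc (2*k₀+1) : ℝ) := by
              rw [hj]; push_cast [Nat.cast_sub (le_of_lt hG4)]; ring
            rw [hmc]
            have hodd := luc_phi_odd' k₀
            have hsplit := phi_split (-(2*(k₀:ℤ)))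
            rw [show -(2*(k₀:ℤ))-1 = -(2*(k₀:ℤ)+1) by ring,
              show -(2*(k₀:ℤ))-2 = -(2*(k₀:ℤ)+2) by ring] at hsplit
            push_cast
            rw [show -(2*((k₀:ℤ)+1)) = -(2*(k₀:ℤ)+2) by ring]
            linarith
          · intro i hi
            rw [hrec] at hi ⊢
            simp only [Finset.mem_insert] at hi ⊢
            rcases hi with rfl|hi
            · push_neg
              refine ⟨by omega, ?_⟩
              intro h; have := (ihb _ h).2; omega
            · have hb := ihb _ hi
              push_neg
              refine ⟨by omega, fun h => ihc i hi h⟩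
          · intro i hi
            rw [hrec] at hi
            simp only [Finset.mem_insert] at hi
            push_cast
            rcases hi with rfl|hi
            · constructor <;> omega
            · have := ihb _ hi; constructor <;> omega
  termination_by (m, k)

/-! ### counting negative digits -/

def nu (n : ℕ) : ℕ := ((F 0 n).filter (fun i : ℤ => i < 0)).card
def mu (k m : ℕ) : ℕ := ((F k m).filter (fun i : ℤ => i < 0)).card

lemma card_filter_pair_union {a b : ℤ} {S : Finset ℤ} (ha : a ∉ S) (hb : b ∉ S)
    (hapos : ¬ a < 0) (hbneg : b < 0) :
    (({a, b} ∪ S).filter (fun i : ℤ => i < 0)).card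
      = 1 + (S.filter (fun i : ℤ => i < 0)).card := by
  have he : ({a, b} ∪ S).filter (fun i : ℤ => i < 0)
      = insert b (S.filter (fun i : ℤ => i < 0)) := by
    ext x
    simp only [Finset.mem_filter, Finset.mem_union, Finset.mem_insert, Finset.mem_singleton]
    constructor
    · rintro ⟨(rfl|rfl)|hx, hneg⟩
      · exact absurd hneg hapos
      · exact Or.inl rfl
      · exact Or.inr ⟨hx, hneg⟩
    · rintro (rfl|⟨hx, hneg⟩)
      · exact ⟨Or.inl (Or.inr rfl), hbneg⟩
      · exact ⟨Or.inr hx, hneg⟩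
  rw [he, Finset.card_insert_of_notMem (by simp [hb])]
  omega

lemma card_filter_insert_neg {a : ℤ} {S : Finset ℤ} (ha : a ∉ S) (haneg : a < 0) :
    ((insert a S).filter (fun i : ℤ => i < 0)).card
      = 1 + (S.filter (fun i : ℤ => i < 0)).card := by
  rw [Finset.filter_insert, if_pos haneg,
    Finset.card_insert_of_notMem (by simp [ha])]
  omega

lemma card_filter_insert_pos {a : ℤ} {S : Finset ℤ} (hapos : ¬ a < 0) :
    ((insert a S).filter (fun i : ℤ => i < 0)).card
      = (S.filter (fun i : ℤ => i < 0)).card := by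
  rw [Finset.filter_insert, if_neg hapos]

lemma nu_zero : nu 0 = 0 := by rw [nu, F0_zero]; rfl
lemma nu_one : nu 1 = 0 := by rw [nu, F0_one]; rfl
lemma nu_two : nu 2 = 1 := by rw [nu, F0_two]; rfl
lemma mu_one_one : mu 1 1 = 1 := by rw [mu, F_G1_one]; rfl
lemma mu_one_two : mu 1 2 = 0 := by rw [mu, F_G1_two]; rfl

lemma sub_le_helper {k n : ℕ} (h2 : n ≤ Luc (2*k+1)) (hk : 1 ≤ k) :
    n - Luc (2*k) ≤ Luc (2*(k-1)+1) := by
  have e : 2*k+1 = (2*(k-1)+1)+2 := by omega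
  rw [e, luc_rec] at h2
  have e2 : 2*(k-1)+1+1 = 2*k := by omega
  rw [e2] at h2
  omega

lemma nu_R2 {k n : ℕ} (hk : 1 ≤ k) (h1 : Luc (2*k) ≤ n) (h2 : n ≤ Luc (2*k+1)) :
    nu n = 1 + nu (n - Luc (2*k)) := by
  have hb' := ((spec 0 (n - Luc (2*k))).1 rfl).2.2 (k-1) (sub_le_helper h2 hk)
  have hcast : ((k-1:ℕ):ℤ) = (k:ℤ)-1 := by omega
  have hK1 : (1:ℤ) ≤ (k:ℤ) := by exact_mod_cast hk
  have hbnd : ∀ i ∈ F 0 (n - Luc (2*k)), -(2*(k:ℤ))+2 ≤ i ∧ i ≤ 2*(k:ℤ)-2 := by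
    intro i hi; have := hb' i hi; rw [hcast] at this
    constructor <;> [linarith [this.1]; linarith [this.2]]
  rw [nu, nu, F_R2 hk h1 h2]
  exact card_filter_pair_union
    (fun h => by have := (hbnd _ h).2; omega)
    (fun h => by have := (hbnd _ h).1; omega)
    (by omega) (by omega)

lemma nu_R3 {k n : ℕ} (hk : 1 ≤ k) (h1 : Luc (2*k+1) < n) (h2 : n < Luc (2*k+2)) :
    nu n = 1 + mu k (n - Luc (2*k+1)) := by
  have hm'1 : 1 ≤ n - Luc (2*k+1) := by omega
  have hm'K : n - Luc (2*k+1) < Luc (2*k) := by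
    have e : Luc (2*k+2) = Luc (2*k+1) + Luc (2*k) := luc_rec _
    omega
  have hb' := ((spec k (n - Luc (2*k+1))).2 hk hm'1 hm'K).2.2
  have hK1 : (1:ℤ) ≤ (k:ℤ) := by exact_mod_cast hk
  rw [nu, mu, F_R3 hk h1 h2]
  exact card_filter_pair_union
    (fun h => by have := (hb' _ h).2; omega)
    (fun h => by have := (hb' _ h).1; omega)
    (by omega) (by omega)

lemma mu_G2 {k m : ℕ} (hk : 1 ≤ k) (hm1 : 1 ≤ m) (hm : m < Luc (2*k)) :
    mu (k+1) m = 1 + mu k m := by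
  have hb' := ((spec k m).2 hk hm1 hm).2.2
  rw [mu, mu, F_G2 hk hm]
  exact card_filter_insert_neg
    (fun h => by have := (hb' _ h).1; omega) (by omega)

lemma mu_G3 {k m : ℕ} (hk : 1 ≤ k) (h1 : Luc (2*k) ≤ m) (h2 : m ≤ Luc (2*k+1)) :
    mu (k+1) m = 1 + nu (m - Luc (2*k)) := by
  have hb' := ((spec 0 (m - Luc (2*k))).1 rfl).2.2 (k-1) (sub_le_helper h2 hk)
  have hcast : ((k-1:ℕ):ℤ) = (k:ℤ)-1 := by omega
  have hK1 : (1:ℤ) ≤ (k:ℤ) := by exact_mod_cast hk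
  have hbnd : ∀ i ∈ F 0 (m - Luc (2*k)), -(2*(k:ℤ))+2 ≤ i ∧ i ≤ 2*(k:ℤ)-2 := by
    intro i hi; have := hb' i hi; rw [hcast] at this
    constructor <;> [linarith [this.1]; linarith [this.2]]
  rw [mu, nu, F_G3 hk h1 h2]
  exact card_filter_pair_union
    (fun h => by have := (hbnd _ h).2; omega)
    (fun h => by have := (hbnd _ h).1; omega)
    (by omega) (by omega)

lemma mu_G4 {k m : ℕ} (hk : 1 ≤ k) (h1 : Luc (2*k+1) < m) (h2 : m < Luc (2*k+2)) :
    mu (k+1) m = mu k (m - Luc (2*k+1)) := by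
  have hj1 : 1 ≤ m - Luc (2*k+1) := by omega
  have hjK : m - Luc (2*k+1) < Luc (2*k) := by
    have e : Luc (2*k+2) = Luc (2*k+1) + Luc (2*k) := luc_rec _
    omega
  have hb' := ((spec k (m - Luc (2*k+1))).2 hk hj1 hjK).2.2
  have hK1 : (1:ℤ) ≤ (k:ℤ) := by exact_mod_cast hk
  rw [mu, mu, F_G4 hk h1]
  exact card_filter_insert_pos (by omega)

/-! ### key values -/

lemma kOf_cover {n : ℕ} (h : 3 ≤ n) :
    1 ≤ kOf n ∧ Luc (2 * kOf n) ≤ n ∧ n < Luc (2 * kOf n + 2) := by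
  have hspec : n < Luc (2 * kOf n + 2) := Nat.find_spec (exists_kOf n)
  have hk1 : 1 ≤ kOf n := by
    by_contra hh
    have h' : kOf n = 0 := by omega
    rw [h'] at hspec; rw [luc_two] at hspec; omega
  have hlow : Luc (2 * kOf n) ≤ n := by
    by_contra hh
    have := Nat.find_min (exists_kOf n) (show kOf n - 1 < kOf n by omega)
    have e : 2 * (kOf n - 1) + 2 = 2 * kOf n := by omega
    rw [e] at this; omega
  exact ⟨hk1, hlow, hspec⟩

lemma nu_luc_odd : ∀ k : ℕ, nu (Luc (2*k+1)) = k
  | 0 => by rw [show 2*0+1 = 1 by rfl, luc_one, nu_one]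
  | (k+1) => by
    have h1 : Luc (2*(k+1)) ≤ Luc (2*(k+1)+1) := luc_mono_le (by omega) (by omega)
    have e : Luc (2*(k+1)+1) = Luc (2*(k+1)) + Luc (2*k+1) := by
      have := luc_rec (2*k+1)
      rw [show 2*k+1+2 = 2*(k+1)+1 by ring, show 2*k+1+1 = 2*(k+1) by ring] at this
      exact this
    have h0 : 0 < Luc (2*k+1) := luc_pos _
    rw [nu_R2 (by omega) (by omega) (le_refl _)]
    rw [show Luc (2*(k+1)+1) - Luc (2*(k+1)) = Luc (2*k+1) by omega]
    rw [nu_luc_odd k]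
    omega

lemma mu_one' : ∀ k : ℕ, 1 ≤ k → mu k 1 = k
  | 0, h => by omega
  | 1, _ => mu_one_one
  | (k+2), _ => by
    have h3 : 3 ≤ Luc (2*(k+1)) := luc_ge_three (by omega)
    rw [mu_G2 (by omega) (by omega) (by omega), mu_one' (k+1) (by omega)]
    omega

lemma mu_top : ∀ k : ℕ, 1 ≤ k → mu k (Luc (2*k) - 1) = 0
  | 0, h => by omega
  | 1, _ => by rw [show Luc 2 - 1 = 2 by rfl]; exact mu_one_two
  | (k+2), _ => by
    have h3 : 3 ≤ Luc (2*(k+1)) := luc_ge_three (by omega)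
    have e : Luc (2*(k+2)) = Luc (2*(k+1)+1) + Luc (2*(k+1)) := by
      have := luc_rec (2*(k+1))
      rw [show 2*(k+1)+2 = 2*(k+2) by ring] at this
      exact this
    have h4 : 0 < Luc (2*(k+1)+1) := luc_pos _
    have e2b : Luc (2*(k+1)+2) = Luc (2*(k+2)) := by
      rw [show 2*(k+1)+2 = 2*(k+2) by ring]
    rw [mu_G4 (by omega) (by omega) (by omega)]
    rw [show Luc (2*(k+2)) - 1 - Luc (2*(k+1)+1) = Luc (2*(k+1)) - 1 by omega]
    exact mu_top (k+1) (by omega)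

/-! ### the main induction -/

theorem main_ind (k m : ℕ) :
    (k = 0 → (nu (m+1) ≤ nu m + 1 ∧ nu m ≤ nu (m+1) + 1)) ∧
    (1 ≤ k → 1 ≤ m → m + 1 < Luc (2*k) →
      (mu k (m+1) ≤ mu k m + 1 ∧ mu k m ≤ mu k (m+1) + 1)) := by
  constructor
  · rintro rfl
    by_cases h0 : m = 0
    · subst h0; rw [nu_zero, nu_one]; omega
    by_cases h1 : m = 1
    · subst h1; rw [nu_one, nu_two]; omega
    by_cases h2 : m = 2
    · subst h2
      have : nu 3 = 1 + nu 0 := by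
        have := nu_R2 (k := 1) (n := 3) (by omega) (by rw [luc_two]) (by rw [luc_three]; omega)
        rw [show 3 - Luc (2*1) = 0 by rw [luc_two]] at this
        exact this
      rw [this, nu_zero, nu_two]; omega
    have hm3 : 3 ≤ m := by omega
    obtain ⟨hk1, hlow, hhigh⟩ := kOf_cover hm3
    set K := kOf m with hK
    have hKpos : 0 < Luc (2*K) := luc_pos _
    have hKpos' : 0 < Luc (2*K+1) := luc_pos _
    have hrecL : Luc (2*K+2) = Luc (2*K+1) + Luc (2*K) := luc_rec _
    have hL3 : 3 ≤ Luc (2*K) := luc_ge_three (by omega)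
    rcases lt_or_ge m (Luc (2*K+1)) with hc1|hc1
    · -- both R2
      have e1 := nu_R2 (k := K) (n := m) hk1 hlow (le_of_lt hc1)
      have e2 := nu_R2 (k := K) (n := m+1) hk1 (by omega) (by omega)
      rw [show m + 1 - Luc (2*K) = (m - Luc (2*K)) + 1 by omega] at e2
      have IH := (main_ind 0 (m - Luc (2*K))).1 rfl
      omega
    rcases eq_or_lt_of_le hc1 with hc2|hc2
    · -- m = Luc (2K+1)
      have e1 : nu m = K := by rw [← hc2]; exact nu_luc_odd K
      have e2 : nu (m+1) = 1 + mu K 1 := by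
        have := nu_R3 (k := K) (n := m+1) hk1 (by omega) (by omega)
        rw [show m + 1 - Luc (2*K+1) = 1 by omega] at this
        exact this
      rw [e1, e2, mu_one' K hk1]; omega
    rcases lt_or_ge (m+1) (Luc (2*K+2)) with hc3|hc3
    · -- both R3
      have e1 := nu_R3 (k := K) (n := m) hk1 hc2 hhigh
      have e2 := nu_R3 (k := K) (n := m+1) hk1 (by omega) (by omega)
      rw [show m + 1 - Luc (2*K+1) = (m - Luc (2*K+1)) + 1 by omega] at e2
      have IH := (main_ind K (m - Luc (2*K+1))).2 hk1 (by omega) (by omega)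
      omega
    · -- m + 1 = Luc (2K+2)
      have hc4 : m + 1 = Luc (2*K+2) := by omega
      have e1 : nu m = 1 + mu K (Luc (2*K) - 1) := by
        have := nu_R3 (k := K) (n := m) hk1 (by omega) (by omega)
        rw [show m - Luc (2*K+1) = Luc (2*K) - 1 by omega] at this
        exact this
      have e2 : nu (m+1) = 1 + nu 0 := by
        have hmono : Luc (2*(K+1)) ≤ Luc (2*(K+1)+1) := luc_mono_le (by omega) (by omega)
        have := nu_R2 (k := K+1) (n := m+1) (by omega)
          (by rw [show 2*(K+1) = 2*K+2 by ring]; omega)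
          (by have hmn : Luc (2*(K+1)) <= Luc (2*(K+1)+1) := luc_mono_le (by omega) (by omega)
              have hrw : Luc (2*(K+1)) = Luc (2*K+2) := by rw [show 2*(K+1) = 2*K+2 by ring]
              omega)
        rw [show m + 1 - Luc (2*(K+1)) = 0 by rw [show 2*(K+1) = 2*K+2 by ring]; omega] at this
        exact this
      rw [e1, e2, mu_top K hk1, nu_zero]; omega
  · intro hk hm1 hmlt
    obtain ⟨k₀, rfl⟩ : ∃ k₀, k = k₀ + 1 := ⟨k - 1, by omega⟩
    by_cases hkk : k₀ = 0
    · subst hkk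
      rw [show 2*(0+1) = 2 by rfl, luc_two] at hmlt
      have : m = 1 := by omega
      subst this
      rw [show (0:ℕ)+1 = 1 by rfl, mu_one_one, mu_one_two]; omega
    have hk₀ : 1 ≤ k₀ := by omega
    have hKpos : 0 < Luc (2*k₀) := luc_pos _
    have hKpos' : 0 < Luc (2*k₀+1) := luc_pos _
    have hrecL : Luc (2*k₀+2) = Luc (2*k₀+1) + Luc (2*k₀) := luc_rec _
    have hL3 : 3 ≤ Luc (2*k₀) := luc_ge_three (by omega)
    have hLuck : Luc (2*(k₀+1)) = Luc (2*k₀+2) := by rw [show 2*(k₀+1) = 2*k₀+2 by ring]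
    rcases lt_or_ge (m+1) (Luc (2*k₀)) with hc1|hc1
    · -- both G2
      have e1 := mu_G2 (k := k₀) (m := m) hk₀ hm1 (by omega)
      have e2 := mu_G2 (k := k₀) (m := m+1) hk₀ (by omega) (by omega)
      have IH := (main_ind k₀ m).2 hk₀ hm1 hc1
      omega
    rcases eq_or_lt_of_le hc1 with hc2|hc2
    · -- m + 1 = Luc (2k₀)
      have e1 : mu (k₀+1) m = 1 + mu k₀ (Luc (2*k₀) - 1) := by
        have := mu_G2 (k := k₀) (m := m) hk₀ hm1 (by omega)
        rw [show m = Luc (2*k₀) - 1 by omega] at this ⊢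
        exact this
      have e2 : mu (k₀+1) (m+1) = 1 + nu 0 := by
        have hmono : Luc (2*k₀) ≤ Luc (2*k₀+1) := luc_mono_le (by omega) (by omega)
        have := mu_G3 (k := k₀) (m := m+1) hk₀ (by omega) (by omega)
        rw [show m + 1 - Luc (2*k₀) = 0 by omega] at this
        exact this
      rw [e1, e2, mu_top k₀ hk₀, nu_zero]; omega
    rcases lt_or_ge m (Luc (2*k₀+1)) with hc3|hc3
    · -- both G3
      have e1 := mu_G3 (k := k₀) (m := m) hk₀ (by omega) (le_of_lt hc3)
      have e2 := mu_G3 (k := k₀) (m := m+1) hk₀ (by omega) (by omega)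
      rw [show m + 1 - Luc (2*k₀) = (m - Luc (2*k₀)) + 1 by omega] at e2
      have IH := (main_ind 0 (m - Luc (2*k₀))).1 rfl
      omega
    rcases eq_or_lt_of_le hc3 with hc4|hc4
    · -- m = Luc (2k₀+1)
      have e1 : mu (k₀+1) m = 1 + nu (Luc (2*(k₀-1)+1)) := by
        have := mu_G3 (k := k₀) (m := m) hk₀ (by omega) (by omega)
        rw [show m - Luc (2*k₀) = Luc (2*(k₀-1)+1) by
          have e : 2*k₀+1 = (2*(k₀-1)+1)+2 := by omega
          have e2 : 2*(k₀-1)+1+1 = 2*k₀ := by omega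
          have := luc_rec (2*(k₀-1)+1)
          rw [← e, e2] at this
          omega] at this
        exact this
      have e2 : mu (k₀+1) (m+1) = mu k₀ 1 := by
        have := mu_G4 (k := k₀) (m := m+1) hk₀ (by omega) (by rw [← hLuck] at *; omega)
        rw [show m + 1 - Luc (2*k₀+1) = 1 by omega] at this
        exact this
      rw [e1, e2, nu_luc_odd, mu_one' k₀ hk₀]
      omega
    · -- both G4
      have e1 := mu_G4 (k := k₀) (m := m) hk₀ hc4 (by rw [← hLuck] at *; omega)
      have e2 := mu_G4 (k := k₀) (m := m+1) hk₀ (by omega) (by rw [← hLuck] at *; omega)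
      rw [show m + 1 - Luc (2*k₀+1) = (m - Luc (2*k₀+1)) + 1 by omega] at e2
      have IH := (main_ind k₀ (m - Luc (2*k₀+1))).2 hk₀ (by omega)
        (by omega)
      omega
  termination_by (m, k)
  decreasing_by
  · exact Prod.Lex.left _ _ (by have := luc_pos (2 * kOf m); omega)
  · exact Prod.Lex.left _ _ (by have := luc_pos (2 * kOf m + 1); omega)
  · exact Prod.Lex.right _ (by omega)
  · exact Prod.Lex.left _ _ (by have := luc_pos (2 * k₀); omega)
  · exact Prod.Lex.left _ _ (by have := luc_pos (2 * k₀ + 1); omega)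

/-! ### uniqueness of canonical representations -/

lemma pval_nonneg (S : Finset ℤ) : 0 ≤ pval S :=
  Finset.sum_nonneg (fun i _ => le_of_lt (phi_zpow_pos i))

lemma pval_lt (S : Finset ℤ) : Canon S → ∀ m : ℤ, (∀ i ∈ S, i ≤ m) → pval S < phi ^ (m+1) := by
  induction S using Finset.strongInductionOn with
  | _ S ih =>
    intro hc m hb
    rcases S.eq_empty_or_nonempty with rfl|hne
    · rw [pval_empty]; exact phi_zpow_pos _
    · set M := S.max' hne with hMdef
      have hM : M ∈ S := S.max'_mem hne
      have hMm : M ≤ m := hb M hM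
      set S' := S.erase M with hS'
      have hsub : S' ⊂ S := Finset.erase_ssubset hM
      have hc' : Canon S' := fun i hi h =>
        hc i (Finset.mem_of_mem_erase hi) (Finset.mem_of_mem_erase h)
      have hb' : ∀ i ∈ S', i ≤ M - 2 := by
        intro i hi
        have hiS : i ∈ S := Finset.mem_of_mem_erase hi
        have hle : i ≤ M := Finset.le_max' S i hiS
        have hne1 : i ≠ M := Finset.ne_of_mem_erase hi
        have hne2 : i ≠ M - 1 := by
          rintro rfl
          exact hc _ hiS (by rw [sub_add_cancel]; exact hM)
        omega
      have ih' := ih S' hsub hc' (M-2) hb'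
      have hsumsplit : pval S = phi ^ M + pval S' := by
        rw [pval, pval, ← Finset.add_sum_erase _ _ hM]
      have hsplit := phi_split (M+1)
      rw [show M+1-1 = M by ring, show M+1-2 = M-1 by ring] at hsplit
      have e : M-2+1 = M-1 := by ring
      rw [e] at ih'
      have hle2 : phi ^ (M+1) ≤ phi ^ (m+1) := phi_zpow_le (by omega)
      calc pval S = phi ^ M + pval S' := hsumsplit
        _ < phi ^ M + phi ^ (M-1) := by linarith
        _ = phi ^ (M+1) := hsplit.symm
        _ ≤ phi ^ (m+1) := hle2

lemma canon_filter {S : Finset ℤ} (hS : Canon S) (p : ℤ → Prop) [DecidablePred p] :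
    Canon (S.filter p) := by
  intro i hi h
  exact hS i (Finset.mem_of_mem_filter i hi) (Finset.mem_of_mem_filter _ h)

lemma no_max_diff {S T : Finset ℤ} (hS : Canon S) (hT : Canon T) (hv : pval S = pval T)
    {M : ℤ} (hMS : M ∈ S) (hMT : M ∉ T) (habove : ∀ i, M < i → (i ∈ S ↔ i ∈ T)) : False := by
  classical
  have splitS := (Finset.sum_filter_add_sum_filter_not S (fun i => M < i)
    (fun i => phi ^ i)).symm
  have splitT := (Finset.sum_filter_add_sum_filter_not T (fun i => M < i)
    (fun i => phi ^ i)).symm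
  have hfeq : S.filter (fun i => M < i) = T.filter (fun i => M < i) := by
    ext i
    simp only [Finset.mem_filter]
    constructor
    · rintro ⟨hi, hMi⟩; exact ⟨(habove i hMi).1 hi, hMi⟩
    · rintro ⟨hi, hMi⟩; exact ⟨(habove i hMi).2 hi, hMi⟩
  have heq2 : pval (S.filter (fun i => ¬ M < i)) = pval (T.filter (fun i => ¬ M < i)) := by
    have h1 : pval S = pval (S.filter (fun i => M < i)) + pval (S.filter (fun i => ¬ M < i)) :=
      splitS
    have h2 : pval T = pval (T.filter (fun i => M < i)) + pval (T.filter (fun i => ¬ M < i)) :=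
      splitT
    rw [hfeq] at h1
    linarith
  have hTb : ∀ i ∈ T.filter (fun i => ¬ M < i), i ≤ M - 1 := by
    intro i hi
    simp only [Finset.mem_filter, not_lt] at hi
    have : i ≠ M := by rintro rfl; exact hMT hi.1
    omega
  have hTlt : pval (T.filter (fun i => ¬ M < i)) < phi ^ M := by
    have := pval_lt _ (canon_filter hT _) (M-1) hTb
    rw [show M-1+1 = M by ring] at this
    exact this
  have hSge : phi ^ M ≤ pval (S.filter (fun i => ¬ M < i)) := by
    apply Finset.single_le_sum (f := fun i => phi ^ i)
      (fun i _ => le_of_lt (phi_zpow_pos i))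
    simp only [Finset.mem_filter, not_lt]
    exact ⟨hMS, le_refl M⟩
  linarith

lemma canon_unique {S T : Finset ℤ} (hS : Canon S) (hT : Canon T) (hv : pval S = pval T) :
    S = T := by
  classical
  by_contra hne
  set W := (S \ T) ∪ (T \ S) with hW
  have hWne : W.Nonempty := by
    by_contra hemp
    rw [Finset.not_nonempty_iff_eq_empty] at hemp
    apply hne
    ext i
    have h1 : i ∉ W := by rw [hemp]; exact Finset.notMem_empty i
    simp only [hW, Finset.mem_union, Finset.mem_sdiff] at h1
    push_neg at h1
    exact ⟨h1.1, h1.2⟩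
  set M := W.max' hWne with hM
  have hMW : M ∈ W := W.max'_mem hWne
  have habove : ∀ i, M < i → (i ∈ S ↔ i ∈ T) := by
    intro i hMi
    by_contra hiff
    have hiW : i ∈ W := by
      simp only [hW, Finset.mem_union, Finset.mem_sdiff]
      by_cases h1 : i ∈ S
      · left; exact ⟨h1, fun h2 => hiff ⟨fun _ => h2, fun _ => h1⟩⟩
      · right
        refine ⟨?_, h1⟩
        by_contra h2
        exact hiff ⟨fun h => absurd h h1, fun h => absurd h h2⟩
    have := Finset.le_max' W i hiW
    omega
  simp only [hW, Finset.mem_union, Finset.mem_sdiff] at hMW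
  rcases hMW with ⟨hMS, hMT⟩|⟨hMT, hMS⟩
  · exact no_max_diff hS hT hv hMS hMT habove
  · exact no_max_diff hT hS hv.symm hMT hMS (fun i hi => (habove i hi).symm)

/-! ### from Finsupp to Finset -/

lemma canonrep_support {x : ℝ} {a : ℤ →₀ ℕ} (h : IsCanonRep x a) :
    (∀ i ∈ a.support, a i = 1) ∧ pval a.support = x ∧ Canon a.support := by
  obtain ⟨⟨hle, hsum⟩, hadj⟩ := h
  have hone : ∀ i ∈ a.support, a i = 1 := by
    intro i hi
    have h1 : a i ≠ 0 := Finsupp.mem_support_iff.mp hi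
    have h2 := hle i
    omega
  refine ⟨hone, ?_, ?_⟩
  · rw [pval, hsum]
    apply Finset.sum_congr rfl
    intro i hi
    rw [hone i hi]
    norm_num
  · intro i hi h'
    have h1 := hone i hi
    have h2 := hone _ h'
    have := hadj i
    rw [h1, h2] at this
    norm_num at this


/-- The first difference of `s_R` takes values in {-1, 0, 1}. Here `d n` denotes the
canonical φ-representation of `n`. -/
theorem sR_diff_mem
    (d : ℕ → ℤ →₀ ℕ) (hd : ∀ n : ℕ, IsCanonRep n (d n)) (n : ℕ) :
    (sR (d (n + 1)) : ℤ) - (sR (d n) : ℤ) ∈ ({-1, 0, 1} : Set ℤ) := by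
  have key : ∀ n : ℕ, sR (d n) = nu n := by
    intro n
    obtain ⟨hone, hval, hcanon⟩ := canonrep_support (hd n)
    have hspec := (spec 0 n).1 rfl
    have hSe : (d n).support = F 0 n :=
      canon_unique hcanon hspec.2.1 (by rw [hval, hspec.1])
    rw [sR, nu, ← hSe]
    rw [Finset.sum_congr rfl (fun i hi => hone i (Finset.mem_of_mem_filter i hi))]
    simp
  have h1 := key (n+1)
  have h2 := key n
  have hM := (main_ind 0 n).1 rfl
  simp only [Set.mem_insert_iff, Set.mem_singleton_iff]
  omega
end

section
/- Let α = (5−√5)/10 and let w(n) = ⌊(n+1)α⌋ − ⌊nα⌋ for n ∈ ℕ. Then for every n ≥ 1, d_0(n+1) = w(n), where d_0(n+1) is the digit of φ^0 in the canonical φ-representation of n+1. -/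
/-- α = (5 - √5)/10. -/
noncomputable def alpha : ℝ := (5 - Real.sqrt 5) / 10

/-- The Sturmian word based on α: `w(n) = ⌊(n+1)α⌋ - ⌊nα⌋`. -/
noncomputable def sturmianW (n : ℕ) : ℤ :=
  ⌊((n : ℝ) + 1) * alpha⌋ - ⌊(n : ℝ) * alpha⌋

namespace PhiAux

noncomputable def psi : ℝ := (1 - Real.sqrt 5) / 2

lemma phi_eq_gold : phi = Real.goldenRatio := rfl
lemma psi_eq_goldConj : psi = Real.goldenConj := rfl

lemma sqrt5_sq : Real.sqrt 5 * Real.sqrt 5 = 5 := Real.mul_self_sqrt (by norm_num)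

lemma sqrt5_gt : (2.2360679:ℝ) < Real.sqrt 5 := by
  have := sqrt5_sq; nlinarith [Real.sqrt_nonneg 5]

lemma sqrt5_lt : Real.sqrt 5 < 2.2360680 := by
  have := sqrt5_sq; nlinarith [Real.sqrt_nonneg 5]

lemma phi_pos : (0:ℝ) < phi := Real.goldenRatio_pos
lemma one_lt_phi : (1:ℝ) < phi := Real.one_lt_goldenRatio
lemma phi_ne_zero : (phi:ℝ) ≠ 0 := Real.goldenRatio_ne_zero
lemma phi_sq : phi ^ 2 = phi + 1 := Real.goldenRatio_sq
lemma psi_sq : psi ^ 2 = psi + 1 := Real.goldenConj_sq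
lemma phi_mul_psi : phi * psi = -1 := Real.goldenRatio_mul_goldenConj
lemma phi_add_psi : phi + psi = 1 := Real.goldenRatio_add_goldenConj
lemma psi_neg : psi < 0 := Real.goldenConj_neg
lemma psi_ne_zero : psi ≠ 0 := Real.goldenConj_ne_zero
lemma phi_inv_eq : phi⁻¹ = -psi := Real.inv_goldenRatio

lemma phi_gt : (1.6180339:ℝ) < phi := by
  have := sqrt5_gt; unfold phi; nlinarith

lemma phi_lt : phi < 1.6180340 := by
  have := sqrt5_lt; unfold phi; nlinarith

lemma psi_gt : (-0.6180340:ℝ) < psi := by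
  have := sqrt5_lt; unfold psi; nlinarith

lemma psi_lt : psi < -0.6180339 := by
  have := sqrt5_gt; unfold psi; nlinarith

lemma zpow_phi_pos (i : ℤ) : (0:ℝ) < phi ^ i := zpow_pos phi_pos i

lemma zpow_phi_lt {m n : ℤ} (h : m < n) : (phi:ℝ) ^ m < phi ^ n :=
  zpow_lt_zpow_right₀ one_lt_phi h

lemma zpow_phi_le {m n : ℤ} (h : m ≤ n) : (phi:ℝ) ^ m ≤ phi ^ n :=
  zpow_le_zpow_right₀ one_lt_phi.le h

lemma zpow_phi_lt_iff {m n : ℤ} : (phi:ℝ) ^ m < phi ^ n ↔ m < n :=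
  zpow_lt_zpow_iff_right₀ one_lt_phi

-- φ^i + φ^(i+1) = φ^(i+2)
lemma phi_zpow_fib (i : ℤ) : (phi:ℝ) ^ i + phi ^ (i+1) = phi ^ (i+2) := by
  have h1 : (phi:ℝ) ^ (i+1) = phi ^ i * phi := by
    rw [zpow_add₀ phi_ne_zero, zpow_one]
  have h2 : (phi:ℝ) ^ (i+2) = phi ^ i * phi ^ (2:ℕ) := by
    rw [zpow_add₀ phi_ne_zero, zpow_ofNat]
  rw [h1, h2]
  have := phi_sq
  nlinarith [zpow_phi_pos i]

lemma psi_zpow_even {i : ℤ} (h : Even i) : (psi:ℝ) ^ i = phi ^ (-i) := by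
  have : psi = -phi⁻¹ := by rw [phi_inv_eq]; ring
  rw [this, h.neg_zpow, inv_zpow, ← zpow_neg]

lemma psi_zpow_odd {i : ℤ} (h : Odd i) : (psi:ℝ) ^ i = -(phi ^ (-i)) := by
  have : psi = -phi⁻¹ := by rw [phi_inv_eq]; ring
  rw [this, h.neg_zpow, inv_zpow, ← zpow_neg]

end PhiAux

namespace PhiAux

/-- nonadjacent set of integers -/
def NA (S : Finset ℤ) : Prop := ∀ i ∈ S, i + 1 ∉ S

lemma NA.mono {S T : Finset ℤ} (h : NA T) (hsub : S ⊆ T) : NA S :=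
  fun i hi hmem => h i (hsub hi) (hsub hmem)

noncomputable def sf (S : Finset ℤ) : ℝ := ∑ i ∈ S, phi ^ i
noncomputable def sg (S : Finset ℤ) : ℝ := ∑ i ∈ S, psi ^ i

lemma sf_nonneg (S : Finset ℤ) : 0 ≤ sf S :=
  Finset.sum_nonneg fun i _ => (zpow_phi_pos i).le

lemma sf_single_le {S : Finset ℤ} {i : ℤ} (hi : i ∈ S) : phi ^ i ≤ sf S :=
  Finset.single_le_sum (fun j _ => (zpow_phi_pos j).le) hi

lemma sf_pos {S : Finset ℤ} (h : S.Nonempty) : 0 < sf S := by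
  obtain ⟨i, hi⟩ := h
  exact lt_of_lt_of_le (zpow_phi_pos i) (sf_single_le hi)

lemma sf_empty : sf ∅ = 0 := by simp [sf]

lemma sf_erase_add {S : Finset ℤ} {i : ℤ} (hi : i ∈ S) :
    sf (S.erase i) + phi ^ i = sf S := Finset.sum_erase_add S _ hi

lemma sg_erase_add {S : Finset ℤ} {i : ℤ} (hi : i ∈ S) :
    sg (S.erase i) + psi ^ i = sg S := Finset.sum_erase_add S _ hi

/-- Key geometric bound: sum of φ^i over a nonadjacent set with elements ≤ t
is < φ^(t+1). -/
lemma sf_lt_of_na : ∀ (n : ℕ) (S : Finset ℤ), S.card = n → NA S →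
    ∀ t : ℤ, (∀ i ∈ S, i ≤ t) → sf S < phi ^ (t + 1) := by
  intro n
  induction n using Nat.strong_induction_on with
  | _ n ih =>
    intro S hcard hNA t ht
    rcases Finset.eq_empty_or_nonempty S with rfl | hne
    · simpa [sf_empty] using zpow_phi_pos (t+1)
    · set M := S.max' hne with hM
      have hMS : M ∈ S := S.max'_mem hne
      have hMt : M ≤ t := ht M hMS
      have herase : ∀ i ∈ S.erase M, i ≤ M - 2 := by
        intro i hi
        have hiS := Finset.mem_of_mem_erase hi
        have hiM : i ≤ M := S.le_max' i hiS
        have hine : i ≠ M := Finset.ne_of_mem_erase hi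
        by_contra hcon
        have : i = M - 1 := by omega
        subst this
        exact hNA (M-1) hiS (by simpa using hMS)
      have hcard' : (S.erase M).card < n := by
        rw [← hcard]
        exact Finset.card_erase_lt_of_mem hMS
      have hlt := ih _ hcard' (S.erase M) rfl (hNA.mono (Finset.erase_subset _ _))
        (M - 2) herase
      have hsum := sf_erase_add hMS
      have hfib := phi_zpow_fib (M - 1)
      have e1 : M - 1 + 1 = M := by ring
      have e2 : M - 1 + 2 = M + 1 := by ring
      rw [e1, e2] at hfib
      have e3 : M - 2 + 1 = M - 1 := by ring
      rw [e3] at hlt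
      have : sf S < phi ^ (M + 1) := by
        rw [← hsum, ← hfib]; linarith
      exact lt_of_lt_of_le this (zpow_phi_le (by omega))

/-- Binet-style: every power of φ (and matching power of ψ) is p + q·φ (resp ψ). -/
lemma exists_pq (i : ℤ) : ∃ p q : ℤ, (phi:ℝ) ^ i = p + q * phi ∧ (psi:ℝ) ^ i = p + q * psi := by
  induction i using Int.induction_on with
  | zero => exact ⟨1, 0, by norm_num, by norm_num⟩
  | succ k ihk =>
    obtain ⟨p, q, h1, h2⟩ := ihk
    refine ⟨q, p + q, ?_, ?_⟩
    · have hz : (phi:ℝ) ^ ((k:ℤ) + 1) = phi ^ (k:ℤ) * phi := by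
        rw [zpow_add₀ phi_ne_zero, zpow_one]
      rw [hz, h1]
      push_cast
      linear_combination (q:ℝ) * phi_sq
    · have hz : (psi:ℝ) ^ ((k:ℤ) + 1) = psi ^ (k:ℤ) * psi := by
        rw [zpow_add₀ psi_ne_zero, zpow_one]
      rw [hz, h2]
      push_cast
      linear_combination (q:ℝ) * psi_sq
  | pred k ihk =>
    obtain ⟨p, q, h1, h2⟩ := ihk
    refine ⟨q - p, p, ?_, ?_⟩
    · have hz : (phi:ℝ) ^ (-(k:ℤ) - 1) * phi = phi ^ (-(k:ℤ)) := by
        rw [← zpow_add_one₀ phi_ne_zero]; ring_nf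
      apply mul_right_cancel₀ phi_ne_zero
      rw [hz, h1]
      push_cast
      linear_combination (-(p:ℝ)) * phi_sq
    · have hz : (psi:ℝ) ^ (-(k:ℤ) - 1) * psi = psi ^ (-(k:ℤ)) := by
        rw [← zpow_add_one₀ psi_ne_zero]; ring_nf
      apply mul_right_cancel₀ psi_ne_zero
      rw [hz, h2]
      push_cast
      linear_combination (-(p:ℝ)) * psi_sq

lemma exists_PQ (S : Finset ℤ) : ∃ P Q : ℤ, sf S = P + Q * phi ∧ sg S = P + Q * psi := by
  induction S using Finset.induction_on with
  | empty => exact ⟨0, 0, by simp [sf_empty], by simp [sg]⟩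
  | @insert a s hni ih =>
    obtain ⟨P, Q, h1, h2⟩ := ih
    obtain ⟨p, q, g1, g2⟩ := exists_pq a
    refine ⟨p + P, q + Q, ?_, ?_⟩
    · rw [sf, Finset.sum_insert hni, ← sf, h1, g1]; push_cast; ring
    · rw [sg, Finset.sum_insert hni, ← sg, h2, g2]; push_cast; ring

/-- Conjugation: if a φ-sum over a finite set equals an integer, the ψ-sum is the same. -/
lemma sg_eq_of_sf_int {S : Finset ℤ} {n : ℤ} (h : sf S = (n:ℝ)) : sg S = (n:ℝ) := by
  obtain ⟨P, Q, h1, h2⟩ := exists_PQ S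
  have hQ : Q = 0 := by
    by_contra hQ
    have hphi : Irrational phi := by rw [phi_eq_gold]; exact Real.goldenRatio_irrational
    have hQR : ((Q:ℤ):ℝ) ≠ 0 := by exact_mod_cast hQ
    have hmul : phi * (Q:ℝ) = (n:ℝ) - P := by linear_combination h - h1
    have hcast : phi = (((n - P : ℤ) / (Q:ℤ) : ℚ) : ℝ) := by
      push_cast
      rw [eq_div_iff hQR]
      linear_combination hmul
    rw [hcast] at hphi
    exact (Rat.not_irrational _) hphi
  subst hQ
  simp only [Int.cast_zero, zero_mul, add_zero] at h1 h2
  rw [h2, ← h1, h]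

end PhiAux

namespace PhiAux

lemma na_of_all_even {T : Finset ℤ} (h : ∀ i ∈ T, Even i) : NA T := by
  intro i hi hmem
  have h1 := h i hi
  have h2 := h (i+1) hmem
  rcases h1 with ⟨a, ha⟩; rcases h2 with ⟨b, hb⟩; omega

lemma na_of_all_odd {T : Finset ℤ} (h : ∀ i ∈ T, ¬ Even i) : NA T := by
  intro i hi hmem
  have h1 := h i hi
  have h2 := h (i+1) hmem
  rw [Int.not_even_iff_odd] at h1 h2
  rcases h1 with ⟨a, ha⟩; rcases h2 with ⟨b, hb⟩; omega

/-- φ-sum of the negations of a set -/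
lemma sum_neg_zpow (T : Finset ℤ) : ∑ i ∈ T, (phi:ℝ) ^ (-i) = sf (T.image (fun i => -i)) := by
  rw [sf, Finset.sum_image (by intro x _ y _ h; have h' : -x = -y := h; omega)]

lemma sg_bound_even {S : Finset ℤ} {b : ℤ} (hE : ∀ i ∈ S, Even i → b ≤ i) :
    0 ≤ sg (S.filter (fun i => Even i)) ∧ sg (S.filter (fun i => Even i)) < phi ^ (1 - b) := by
  set E := S.filter (fun i => Even i) with hEdef
  have hmem : ∀ i ∈ E, Even i ∧ b ≤ i := by
    intro i hi
    rw [hEdef, Finset.mem_filter] at hi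
    exact ⟨hi.2, hE i hi.1 hi.2⟩
  have heq : sg E = ∑ i ∈ E, (phi:ℝ) ^ (-i) := by
    apply Finset.sum_congr rfl
    intro i hi
    exact psi_zpow_even (hmem i hi).1
  constructor
  · rw [heq]; exact Finset.sum_nonneg fun i _ => (zpow_phi_pos (-i)).le
  · rw [heq, sum_neg_zpow]
    have hNA : NA (E.image (fun i => -i)) := by
      apply na_of_all_even
      intro i hi
      rw [Finset.mem_image] at hi
      obtain ⟨x, hx, rfl⟩ := hi
      exact ((hmem x hx).1).neg
    have hub : ∀ i ∈ E.image (fun i => -i), i ≤ -b := by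
      intro i hi
      rw [Finset.mem_image] at hi
      obtain ⟨x, hx, rfl⟩ := hi
      have := (hmem x hx).2; omega
    have := sf_lt_of_na _ _ rfl hNA (-b) hub
    rwa [show -b + 1 = 1 - b by ring] at this

lemma sg_bound_odd {S : Finset ℤ} {b : ℤ} (hO : ∀ i ∈ S, ¬ Even i → b ≤ i) :
    -(phi ^ (1 - b)) < sg (S.filter (fun i => ¬ Even i)) ∧
      sg (S.filter (fun i => ¬ Even i)) ≤ 0 := by
  set O := S.filter (fun i => ¬ Even i) with hOdef
  have hmem : ∀ i ∈ O, ¬ Even i ∧ b ≤ i := by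
    intro i hi
    rw [hOdef, Finset.mem_filter] at hi
    exact ⟨hi.2, hO i hi.1 hi.2⟩
  have heq : sg O = -∑ i ∈ O, (phi:ℝ) ^ (-i) := by
    rw [← Finset.sum_neg_distrib]
    apply Finset.sum_congr rfl
    intro i hi
    rw [psi_zpow_odd (Int.not_even_iff_odd.mp (hmem i hi).1)]
  constructor
  · rw [heq, neg_lt_neg_iff, sum_neg_zpow]
    have hNA : NA (O.image (fun i => -i)) := by
      apply na_of_all_odd
      intro i hi
      rw [Finset.mem_image] at hi
      obtain ⟨x, hx, rfl⟩ := hi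
      have hodd := (hmem x hx).1
      rw [Int.not_even_iff_odd] at hodd ⊢
      exact hodd.neg
    have hub : ∀ i ∈ O.image (fun i => -i), i ≤ -b := by
      intro i hi
      rw [Finset.mem_image] at hi
      obtain ⟨x, hx, rfl⟩ := hi
      have := (hmem x hx).2; omega
    have := sf_lt_of_na _ _ rfl hNA (-b) hub
    rwa [show -b + 1 = 1 - b by ring] at this
  · rw [heq, neg_nonpos]
    exact Finset.sum_nonneg fun i _ => (zpow_phi_pos (-i)).le

lemma sg_split (S : Finset ℤ) :
    sg S = sg (S.filter (fun i => Even i)) + sg (S.filter (fun i => ¬ Even i)) := by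
  rw [sg, sg, sg, Finset.sum_filter_add_sum_filter_not]

/-- combined two-sided bound on ψ-sums -/
lemma sg_bounds {S : Finset ℤ} {bE bO : ℤ} (hE : ∀ i ∈ S, Even i → bE ≤ i)
    (hO : ∀ i ∈ S, ¬ Even i → bO ≤ i) :
    -(phi ^ (1 - bO)) < sg S ∧ sg S < phi ^ (1 - bE) := by
  have h1 := sg_bound_even hE
  have h2 := sg_bound_odd hO
  rw [sg_split S]
  constructor <;> linarith [h1.1, h1.2, h2.1, h2.2]

end PhiAux

namespace PhiAux

lemma erase_min_lb {S : Finset ℤ} (hNA : NA S) (hne : S.Nonempty) :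
    ∀ i ∈ S.erase (S.min' hne), S.min' hne + 2 ≤ i := by
  intro i hi
  set l := S.min' hne
  have hiS := Finset.mem_of_mem_erase hi
  have h1 : l ≤ i := S.min'_le i hiS
  have h2 : i ≠ l := Finset.ne_of_mem_erase hi
  have h3 : i ≠ l + 1 := by
    intro h
    exact hNA l (S.min'_mem hne) (h ▸ hiS)
  omega

/-- Structure of the minimum digit of a canonical representation of a positive
integer: it is even, ≤ 0; equal to 0 only for n = 1, and if negative then
φ^(-ℓ-1) < n. -/
lemma min_props {S : Finset ℤ} (hNA : NA S) {n : ℤ} (hn : 1 ≤ n) (h : sf S = (n:ℝ))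
    (hne : S.Nonempty) :
    Even (S.min' hne) ∧ S.min' hne ≤ 0 ∧ (S.min' hne = 0 → n = 1) ∧
      (S.min' hne < 0 → phi ^ (-(S.min' hne) - 1) < (n:ℝ)) := by
  have hg : sg S = (n:ℝ) := sg_eq_of_sf_int h
  set l := S.min' hne with hl
  have hlS : l ∈ S := S.min'_mem hne
  have hmin : ∀ i ∈ S, l ≤ i := fun i hi => S.min'_le i hi
  have herase := erase_min_lb hNA hne
  have hn1 : (1:ℝ) ≤ (n:ℝ) := by exact_mod_cast hn
  -- numeric facts
  have hphi1 : (1:ℝ) < phi := one_lt_phi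
  -- l ≤ 0
  have hle0 : l ≤ 0 := by
    by_contra hpos
    push_neg at hpos
    have hb := sg_bounds (S := S) (bE := 2) (bO := 1)
      (fun i hi he => by
        have := hmin i hi
        rcases he with ⟨a, ha⟩; omega)
      (fun i hi ho => by have := hmin i hi; omega)
    rw [hg] at hb
    have : phi ^ (1 - (2:ℤ)) < 1 := by
      have := zpow_phi_lt (show (1:ℤ) - 2 < 0 by norm_num)
      simpa using this
    linarith [hb.2]
  -- Even l
  have heven : Even l := by
    by_contra hodd
    rw [Int.not_even_iff_odd] at hodd
    have hsplit := sg_erase_add hlS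
    have hb := sg_bounds (S := S.erase l) (bE := l + 3) (bO := l + 2)
      (fun i hi he => by
        have h2 := herase i hi
        rcases he with ⟨a, ha⟩; rcases hodd with ⟨b, hb⟩; omega)
      (fun i hi ho => herase i hi)
    have hval : (psi:ℝ) ^ l = -(phi ^ (-l)) := psi_zpow_odd hodd
    have hkey : (phi:ℝ) ^ (1 - (l+3)) ≤ phi ^ (-l - 2) := zpow_phi_le (by omega)
    have hid := phi_zpow_fib (-l - 2)
    rw [show -l - 2 + 1 = -l - 1 by ring, show -l - 2 + 2 = -l by ring] at hid
    -- sg S = sg erase + psi^l < φ^{-l-2} - φ^{-l} < 0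
    have : sg S < 0 := by
      rw [← hsplit, hval]
      have := zpow_phi_pos (-l - 1)
      nlinarith [hb.2]
    rw [hg] at this; linarith
  refine ⟨heven, hle0, ?_, ?_⟩
  · -- l = 0 → n = 1
    intro h0
    have hsplit := sg_erase_add hlS
    have hb := sg_bounds (S := S.erase l) (bE := 2) (bO := 3)
      (fun i hi he => by
        have h2 := herase i hi
        rcases he with ⟨a, ha⟩; omega)
      (fun i hi ho => by
        have h2 := herase i hi
        rw [Int.not_even_iff_odd] at ho
        rcases ho with ⟨a, ha⟩; omega)
    have hval : (psi:ℝ) ^ l = 1 := by rw [h0, zpow_zero]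
    have e1 : (phi:ℝ) ^ (1 - (2:ℤ)) = phi⁻¹ := by norm_num
    have e2 : (phi:ℝ) ^ (1 - (3:ℤ)) = phi⁻¹ * phi⁻¹ := by
      rw [show (1:ℤ) - 3 = -1 + -1 by norm_num, zpow_add₀ phi_ne_zero]
      norm_num
    have hinv : phi⁻¹ < 0.62 := by
      rw [phi_inv_eq]
      have := psi_gt; linarith
    have hinvpos : (0:ℝ) < phi⁻¹ := inv_pos.mpr phi_pos
    have hup : sg S < 1 + 0.62 := by
      rw [← hsplit, hval]
      have := hb.2; rw [e1] at this
      nlinarith [hb.1]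
    have hlo : (1:ℝ) - 0.62 * 0.62 < sg S := by
      rw [← hsplit, hval]
      have := hb.1; rw [e2] at this
      nlinarith [hb.2]
    rw [hg] at hup hlo
    have : n < 2 := by
      by_contra hc
      push_neg at hc
      have : (2:ℝ) ≤ (n:ℝ) := by exact_mod_cast hc
      linarith
    omega
  · -- l < 0 → φ^(-l-1) < n
    intro hneg
    have hsplit := sg_erase_add hlS
    have hb := sg_bounds (S := S.erase l) (bE := l + 2) (bO := l + 3)
      (fun i hi he => herase i hi)
      (fun i hi ho => by
        have h2 := herase i hi
        rw [Int.not_even_iff_odd] at ho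
        rcases ho with ⟨a, ha⟩; rcases heven with ⟨b, hbb⟩; omega)
    have hval : (psi:ℝ) ^ l = phi ^ (-l) := psi_zpow_even heven
    have hkey : (phi:ℝ) ^ (1 - (l+3)) ≤ phi ^ (-l - 2) := zpow_phi_le (by omega)
    have hid := phi_zpow_fib (-l - 2)
    rw [show -l - 2 + 1 = -l - 1 by ring, show -l - 2 + 2 = -l by ring] at hid
    have hbE0 : 0 ≤ sg ((S.erase l).filter (fun i => Even i)) :=
      (sg_bound_even (S := S.erase l) (b := l+2) (fun i hi _ => herase i hi)).1
    have hbO := (sg_bound_odd (S := S.erase l) (b := l+3)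
      (fun i hi ho => by
        have h2 := herase i hi
        rw [Int.not_even_iff_odd] at ho
        rcases ho with ⟨a, ha⟩; rcases heven with ⟨b, hbb⟩; omega)).1
    have : phi ^ (-l) - phi ^ (-l - 2) < sg S := by
      rw [← hsplit, hval, sg_split (S.erase l)]
      have : -(phi ^ (1 - (l+3))) ≥ -(phi ^ (-l-2)) := by
        simp only [neg_le_neg_iff, ge_iff_le, neg_le]
        have : (phi:ℝ) ^ (1 - (l+3)) ≤ phi ^ (-l-2) := zpow_phi_le (by omega)
        linarith
      linarith [hbO, hbE0]
    rw [hg] at this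
    linarith
  
end PhiAux

namespace PhiAux

/-- Uniqueness: two nonadjacent finsets with the same φ-sum are equal. -/
lemma na_sum_unique : ∀ (n : ℕ) (S T : Finset ℤ), S.card = n → NA S → NA T →
    sf S = sf T → S = T := by
  intro n
  induction n using Nat.strong_induction_on with
  | _ n ih =>
    intro S T hcard hS hT hsum
    rcases Finset.eq_empty_or_nonempty S with rfl | hSne
    · rcases Finset.eq_empty_or_nonempty T with rfl | hTne
      · rfl
      · exfalso
        have := sf_pos hTne
        rw [← hsum, sf_empty] at this
        linarith
    · have hTne : T.Nonempty := by
        rcases Finset.eq_empty_or_nonempty T with rfl | h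
        · exfalso
          have := sf_pos hSne
          rw [hsum, sf_empty] at this
          linarith
        · exact h
      set s := S.max' hSne with hs
      set t := T.max' hTne with ht
      have hst : s = t := by
        have h1 : phi ^ s ≤ sf S := sf_single_le (S.max'_mem hSne)
        have h2 : phi ^ t ≤ sf T := sf_single_le (T.max'_mem hTne)
        have h3 : sf S < phi ^ (t + 1) := by
          rw [hsum]
          exact sf_lt_of_na _ _ rfl hT t (fun i hi => T.le_max' i hi)
        have h4 : sf T < phi ^ (s + 1) := by
          rw [← hsum]
          exact sf_lt_of_na _ _ rfl hS s (fun i hi => S.le_max' i hi)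
        have e1 : s < t + 1 := zpow_phi_lt_iff.mp (lt_of_le_of_lt h1 h3)
        have e2 : t < s + 1 := zpow_phi_lt_iff.mp (lt_of_le_of_lt h2 h4)
        omega
      have hsmem : s ∈ S := S.max'_mem hSne
      have htmem : s ∈ T := hst ▸ T.max'_mem hTne
      have hsum' : sf (S.erase s) = sf (T.erase s) := by
        have a1 := sf_erase_add hsmem
        have a2 := sf_erase_add htmem
        linarith
      have hcard' : (S.erase s).card < n := hcard ▸ Finset.card_erase_lt_of_mem hsmem
      have := ih _ hcard' (S.erase s) (T.erase s) rfl
        (hS.mono (Finset.erase_subset _ _)) (hT.mono (Finset.erase_subset _ _)) hsum'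
      have hS' : S = insert s (S.erase s) := (Finset.insert_erase hsmem).symm
      have hT' : T = insert s (T.erase s) := (Finset.insert_erase htmem).symm
      rw [hS', hT', this]

section WithD

variable {d : ℕ → ℤ →₀ ℕ} (hd : ∀ n : ℕ, IsCanonRep n (d n))

include hd

lemma supp_na (N : ℕ) : NA (d N).support := by
  intro i hi hmem
  have h := (hd N).2 i
  rw [Finsupp.mem_support_iff] at hi hmem
  exact absurd h (by positivity)

lemma supp_sf (N : ℕ) : sf ((d N).support) = (N:ℝ) := by
  have h := (hd N).1
  rw [sf]
  have := h.2
  rw [this]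
  apply Finset.sum_congr rfl
  intro i hi
  rw [Finsupp.mem_support_iff] at hi
  have h1 := h.1 i
  have : (d N) i = 1 := by omega
  rw [this]
  norm_num

/-- identify the support of `d N` from an explicit candidate -/
lemma supp_eq (N : ℕ) (T : Finset ℤ) (hT : NA T) (hsum : sf T = (N:ℝ)) :
    (d N).support = T := by
  apply na_sum_unique ((d N).support.card) _ _ rfl (supp_na hd N) hT
  rw [supp_sf hd N, hsum]

lemma d_val_eq_ite (N : ℕ) :
    ((d N) 0 : ℤ) = if (0:ℤ) ∈ (d N).support then 1 else 0 := by
  have h1 := ((hd N).1).1 0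
  by_cases h : (0:ℤ) ∈ (d N).support
  · rw [if_pos h]
    rw [Finsupp.mem_support_iff] at h
    omega
  · rw [if_neg h]
    rw [Finsupp.notMem_support_iff] at h
    omega

end WithD

end PhiAux

namespace PhiAux

def Luc : ℕ → ℕ
  | 0 => 2
  | 1 => 1
  | (k+2) => Luc k + Luc (k+1)

lemma luc_binet_pair : ∀ k : ℕ, ((Luc k : ℕ):ℝ) = phi ^ (k:ℤ) + psi ^ (k:ℤ) ∧
    ((Luc (k+1) : ℕ):ℝ) = phi ^ ((k:ℤ)+1) + psi ^ ((k:ℤ)+1) := by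
  intro k
  induction k with
  | zero =>
    constructor
    · show ((2:ℕ):ℝ) = phi ^ (0:ℤ) + psi ^ (0:ℤ)
      norm_num
    · show ((1:ℕ):ℝ) = phi ^ (1:ℤ) + psi ^ (1:ℤ)
      have := phi_add_psi
      push_cast
      simp only [zpow_one]
      linarith
  | succ n ih =>
    obtain ⟨h1, h2⟩ := ih
    refine ⟨h2, ?_⟩
    show ((Luc n + Luc (n+1) : ℕ):ℝ) = _
    push_cast
    rw [h1, h2]
    have e1 := phi_zpow_fib (n:ℤ)
    have e2 : (psi:ℝ) ^ ((n:ℤ)) + psi ^ ((n:ℤ)+1) = psi ^ ((n:ℤ)+2) := by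
      have a1 : (psi:ℝ) ^ ((n:ℤ)+1) = psi ^ (n:ℤ) * psi := by
        rw [zpow_add₀ psi_ne_zero, zpow_one]
      have a2 : (psi:ℝ) ^ ((n:ℤ)+2) = psi ^ (n:ℤ) * psi ^ (2:ℕ) := by
        rw [zpow_add₀ psi_ne_zero, zpow_ofNat]
      rw [a1, a2]
      linear_combination (-(psi ^ (n:ℤ))) * psi_sq
    push_cast
    rw [show ((n:ℤ)+1+1) = (n:ℤ)+2 by ring]
    linarith

lemma luc_binet (k : ℕ) : ((Luc k : ℕ):ℝ) = phi ^ (k:ℤ) + psi ^ (k:ℤ) :=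
  (luc_binet_pair k).1

lemma luc_pos (k : ℕ) : 1 ≤ Luc k := by
  induction k using Nat.strong_induction_on with
  | _ k ih =>
    match k with
    | 0 => decide
    | 1 => decide
    | (n+2) =>
      have := ih n (by omega)
      have := ih (n+1) (by omega)
      show 1 ≤ Luc n + Luc (n+1)
      omega

lemma luc_ge : ∀ k : ℕ, k ≤ Luc k := by
  intro k
  induction k using Nat.strong_induction_on with
  | _ k ih =>
    match k with
    | 0 => decide
    | 1 => decide
    | (n+2) =>
      have h1 := ih n (by omega)
      have h2 := ih (n+1) (by omega)
      have := luc_pos n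
      show n+2 ≤ Luc n + Luc (n+1)
      omega

lemma luc_two : Luc 2 = 3 := rfl

lemma luc_add (k : ℕ) : Luc (k+2) = Luc k + Luc (k+1) := rfl

/-- partition: every N ≥ 3 lies in some [Luc k, Luc (k+1)) with k ≥ 2 -/
lemma luc_partition (N : ℕ) (hN : 3 ≤ N) :
    ∃ k : ℕ, 2 ≤ k ∧ Luc k ≤ N ∧ N < Luc (k+1) := by
  classical
  set P : ℕ → Prop := fun k => Luc k ≤ N with hP
  have hP2 : P 2 := by rw [hP]; simpa [luc_two]
  set k0 := Nat.findGreatest P (N+2) with hk0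
  have hk02 : 2 ≤ k0 := Nat.le_findGreatest (by omega) hP2
  have hPk0 : P k0 := Nat.findGreatest_spec (by omega) hP2
  refine ⟨k0, hk02, hPk0, ?_⟩
  by_contra hcon
  push_neg at hcon
  have hbound : k0 + 1 ≤ N + 2 := by
    have := luc_ge k0
    have : k0 ≤ N := le_trans this hPk0
    omega
  have := Nat.findGreatest_is_greatest (P := P) (n := N+2) (k := k0+1) (by rw [← hk0]; omega) hbound
  exact this hcon

end PhiAux

namespace PhiAux

lemma sqrt5_eq : Real.sqrt 5 = 2 * phi - 1 := by unfold phi; ring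

lemma sqrt5_ne : Real.sqrt 5 ≠ 0 := by have := sqrt5_gt; intro h; rw [h] at this; norm_num at this

lemma sqrt5_pos : (0:ℝ) < Real.sqrt 5 := by have := sqrt5_gt; linarith

lemma alpha_sqrt5 : alpha * Real.sqrt 5 = -psi := by
  unfold alpha psi
  have := sqrt5_sq
  nlinarith

lemma neg_psi_eq : -psi = phi ^ (-1:ℤ) := by
  rw [zpow_neg_one, phi_inv_eq]

lemma alpha_phi_sqrt5 : alpha * phi * Real.sqrt 5 = 1 := by
  have h1 := alpha_sqrt5
  have h2 := phi_mul_psi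
  linear_combination phi * h1 - h2

lemma alpha_phi2 : alpha * (phi + 2) = 1 := by
  have h1 := alpha_phi_sqrt5
  have h2 := sqrt5_eq
  have h3 := phi_sq
  linear_combination h1 + (-(alpha*phi)) * h2 + (-(2*alpha)) * h3

lemma alpha_gt : (0.2763932:ℝ) < alpha := by
  unfold alpha; have := sqrt5_lt; linarith

lemma alpha_lt : alpha < 0.2763933 := by
  unfold alpha; have := sqrt5_gt; linarith

lemma alpha_pos : 0 < alpha := by have := alpha_gt; linarith

lemma phi_zpow_neg_mul (i : ℤ) : (phi:ℝ) ^ (-i) * phi ^ i = 1 := by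
  rw [← zpow_add₀ phi_ne_zero]; norm_num

lemma phim1_gt : (0.6180339:ℝ) < phi ^ (-1:ℤ) := by
  rw [← neg_psi_eq]; have := psi_lt; linarith

lemma phim1_lt : (phi:ℝ) ^ (-1:ℤ) < 0.6180340 := by
  rw [← neg_psi_eq]; have := psi_gt; linarith

lemma phim2_lt : (phi:ℝ) ^ (-2:ℤ) < 0.382 := by
  have h := phi_zpow_neg_mul 2
  have h2 : (phi:ℝ) ^ (2:ℤ) = phi^(2:ℕ) := by rw [zpow_ofNat]
  rw [h2] at h
  have h3 := phi_sq
  have := phi_gt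
  have hpos : (0:ℝ) < phi ^ (-2:ℤ) := zpow_phi_pos _
  nlinarith

lemma phim3_lt : (phi:ℝ) ^ (-3:ℤ) < 0.2362 := by
  have h := phi_zpow_neg_mul 3
  have h2 : (phi:ℝ) ^ (3:ℤ) = phi^(3:ℕ) := by rw [zpow_ofNat]
  rw [h2] at h
  have h3 := phi_sq
  have := phi_gt
  have hpos : (0:ℝ) < phi ^ (-3:ℤ) := zpow_phi_pos _
  nlinarith [pow_pos phi_pos 3]

lemma abs_psi_zpow (i : ℤ) : |psi ^ i| = phi ^ (-i) := by
  rcases Int.even_or_odd i with h | h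
  · rw [psi_zpow_even h]; exact abs_of_pos (zpow_phi_pos _)
  · rw [psi_zpow_odd (Int.not_even_iff_odd.mpr h |> Int.not_even_iff_odd.mp)]
    rw [abs_neg]; exact abs_of_pos (zpow_phi_pos _)

set_option maxHeartbeats 2000000 in
/-- Quantitative irrationality margin: for 1 ≤ k with k ≤ φ^(r-1),
every integer p is at distance > φ^(-r)/√5 from k·α. -/
lemma margin {r : ℕ} (hr : 2 ≤ r) {k p : ℤ} (hk : 1 ≤ k)
    (hkr : (k:ℝ) ≤ phi ^ ((r:ℤ) - 1)) :
    phi ^ (-(r:ℤ)) / Real.sqrt 5 < |(k:ℝ) * alpha - p| := by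
  have hs5 := sqrt5_pos
  have hαg := alpha_gt
  have hαl := alpha_lt
  have hkR : (1:ℝ) ≤ (k:ℝ) := by exact_mod_cast hk
  -- case p ≤ 0 : distance at least alpha
  rcases le_or_gt p 0 with hp0 | hp1
  · have hpR : (p:ℝ) ≤ 0 := by exact_mod_cast hp0
    have hval : (k:ℝ) * alpha - p ≥ alpha := by nlinarith
    have habs : |(k:ℝ) * alpha - p| = (k:ℝ)*alpha - p := abs_of_pos (by nlinarith)
    rw [habs]
    -- φ^{-r}/√5 ≤ φ^{-2}/√5 < φ^{-1}/√5 = α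
    have h1 : (phi:ℝ) ^ (-(r:ℤ)) ≤ phi ^ (-2:ℤ) := zpow_phi_le (by omega)
    have h2 : (phi:ℝ) ^ (-2:ℤ) < phi ^ (-1:ℤ) := zpow_phi_lt (by norm_num)
    have h3 : alpha * Real.sqrt 5 = phi ^ (-1:ℤ) := by rw [alpha_sqrt5, neg_psi_eq]
    have : phi ^ (-(r:ℤ)) / Real.sqrt 5 < alpha := by
      rw [div_lt_iff₀ hs5, h3]
      exact lt_of_le_of_lt h1 h2
    linarith
  · -- p ≥ 1
    have hpR : (1:ℝ) ≤ (p:ℝ) := by exact_mod_cast hp1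
    rcases eq_or_lt_of_le hr with hr2 | hr3
    · -- r = 2 : then k = 1
      have hk1 : k = 1 := by
        have : (k:ℝ) ≤ phi ^ ((2:ℤ) - 1) := by rw [hr2.symm] at hkr; exact_mod_cast hkr
        have h2 : (phi:ℝ) ^ ((2:ℤ)-1) = phi := by norm_num
        rw [h2] at this
        have := phi_lt
        have : (k:ℝ) < 2 := by linarith
        have : k < 2 := by exact_mod_cast this
        omega
      subst hk1
      have hval : |(1:ℝ) * alpha - p| ≥ 1 - alpha := by
        rw [abs_sub_comm]
        have : (p:ℝ) - 1*alpha ≥ 1 - alpha := by nlinarith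
        rw [abs_of_pos (by nlinarith)]
        linarith
      have h1 : (phi:ℝ) ^ (-(r:ℤ)) ≤ phi ^ (-2:ℤ) := zpow_phi_le (by omega)
      have := phim2_lt
      have : phi ^ (-(r:ℤ)) / Real.sqrt 5 < 0.2 := by
        rw [div_lt_iff₀ hs5]
        nlinarith [sqrt5_gt]
      linarith
    · -- r ≥ 3
      have hr3' : (3:ℕ) ≤ r := hr3
      by_cases hbig : (0.11:ℝ) < |(k:ℝ) * alpha - p|
      · have h1 : (phi:ℝ) ^ (-(r:ℤ)) ≤ phi ^ (-3:ℤ) := zpow_phi_le (by omega)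
        have := phim3_lt
        have : phi ^ (-(r:ℤ)) / Real.sqrt 5 < 0.11 := by
          rw [div_lt_iff₀ hs5]
          nlinarith [sqrt5_gt]
        linarith
      · push_neg at hbig
        set q : ℤ := k - 2*p with hq
        have hfac : ((q:ℝ) - p*phi) * ((q:ℝ) - p*psi) = ((q*q - p*q - p*p : ℤ):ℝ) := by
          push_cast
          linear_combination (-(p:ℝ)*(q:ℝ)) * phi_add_psi + ((p:ℝ)*(p:ℝ)) * phi_mul_psi
        have hpne : (p:ℝ) ≠ 0 := by positivity
        have hne1 : (q:ℝ) - p*phi ≠ 0 := by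
          intro h
          have hphi : Irrational phi := by rw [phi_eq_gold]; exact Real.goldenRatio_irrational
          have : phi = (((q:ℤ) / (p:ℤ) : ℚ):ℝ) := by
            push_cast
            rw [eq_div_iff hpne]
            linarith
          rw [this] at hphi
          exact (Rat.not_irrational _) hphi
        have hne2 : (q:ℝ) - p*psi ≠ 0 := by
          intro h
          have hpsi : Irrational psi := by rw [psi_eq_goldConj]; exact Real.goldenConj_irrational
          have : psi = (((q:ℤ) / (p:ℤ) : ℚ):ℝ) := by
            push_cast
            rw [eq_div_iff hpne]
            linarith
          rw [this] at hpsi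
          exact (Rat.not_irrational _) hpsi
        have hZ : ((q*q - p*q - p*p : ℤ):ℝ) ≠ 0 := by
          rw [← hfac]
          exact mul_ne_zero hne1 hne2
        have hZint : q*q - p*q - p*p ≠ 0 := by exact_mod_cast hZ
        have habs1 : (1:ℝ) ≤ |((q*q - p*q - p*p : ℤ):ℝ)| := by
          rw [← Int.cast_abs]
          have : (1:ℤ) ≤ |q*q - p*q - p*p| := Int.one_le_abs hZint
          exact_mod_cast this
        have hprod : (1:ℝ) ≤ |(q:ℝ) - p*phi| * |(q:ℝ) - p*psi| := by
          rw [← abs_mul, hfac]; exact habs1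
        have hdiff : (k:ℝ)*alpha - p = alpha * ((q:ℝ) - p*phi) := by
          rw [hq]
          push_cast
          linear_combination (p:ℝ) * alpha_phi2
        -- bound |q - p psi| < φ^{r-1}
        have hX : (phi:ℝ)^(2:ℤ) ≤ phi ^ ((r:ℤ)-1) := zpow_phi_le (by omega)
        have hXval : (phi:ℝ)^(2:ℤ) = phi + 1 := by
          rw [zpow_ofNat]; exact phi_sq
        set X := (phi:ℝ) ^ ((r:ℤ)-1) with hXdef
        have hXpos : 0 < X := zpow_phi_pos _
        have hX26 : (2.6:ℝ) < X := by
          have := phi_gt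
          rw [hXval] at hX
          linarith
        have hqphi : |(q:ℝ) - p*phi| ≤ 0.4 := by
          have : |(k:ℝ)*alpha - p| = alpha * |(q:ℝ) - p*phi| := by
            rw [hdiff, abs_mul, abs_of_pos alpha_pos]
          rw [this] at hbig
          nlinarith [abs_nonneg ((q:ℝ) - p*phi)]
        have hpbound : (p:ℝ) * Real.sqrt 5 ≤ (k:ℝ) * (phi ^ (-1:ℤ)) + 0.246 := by
          -- p ≤ k α + 0.11
          have h1 : (p:ℝ) ≤ (k:ℝ)*alpha + 0.11 := by
            have := abs_le.mp hbig
            linarith [this.1]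
          have h2 : alpha * Real.sqrt 5 = phi ^ (-1:ℤ) := by
            rw [alpha_sqrt5, neg_psi_eq]
          have h3 : (0:ℝ) < (k:ℝ) := by linarith
          calc (p:ℝ) * Real.sqrt 5 ≤ ((k:ℝ)*alpha + 0.11) * Real.sqrt 5 := by
                nlinarith
            _ = (k:ℝ) * (alpha * Real.sqrt 5) + 0.11 * Real.sqrt 5 := by ring
            _ ≤ (k:ℝ) * (phi ^ (-1:ℤ)) + 0.246 := by
                rw [h2]
                nlinarith [sqrt5_lt]
        have hqpsi : |(q:ℝ) - p*psi| < X := by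
          have hrw : (q:ℝ) - p*psi = ((q:ℝ) - p*phi) + p * Real.sqrt 5 := by
            have hps : phi - psi = Real.sqrt 5 := by unfold phi psi; ring
            linear_combination (p:ℝ) * hps
          rw [hrw]
          have h5pos : 0 < (p:ℝ) * Real.sqrt 5 := by positivity
          have habs2 : |((q:ℝ) - p*phi) + p * Real.sqrt 5| ≤ 0.4 + (p:ℝ)*Real.sqrt 5 := by
            calc |((q:ℝ) - p*phi) + p * Real.sqrt 5| ≤ |(q:ℝ) - p*phi| + |(p:ℝ)*Real.sqrt 5| :=
                abs_add_le _ _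
              _ ≤ 0.4 + (p:ℝ)*Real.sqrt 5 := by
                  rw [abs_of_pos h5pos]; linarith
          have hm1pos : (0:ℝ) < phi ^ (-1:ℤ) := zpow_phi_pos _
          have hkinv : (k:ℝ) * (phi ^ (-1:ℤ)) ≤ X * (phi ^ (-1:ℤ)) :=
            mul_le_mul_of_nonneg_right hkr hm1pos.le
          have hXf : X * (phi ^ (-1:ℤ)) < X * 0.6180340 := by
            exact mul_lt_mul_of_pos_left phim1_lt hXpos
          have hlast : 0.4 + (X * 0.6180340 + 0.246) < X := by linarith
          linarith [habs2, hpbound, hkinv, hXf]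
        -- conclude
        have habsne : (0:ℝ) < |(q:ℝ) - p*psi| := abs_pos.mpr hne2
        have hstep1 : 1 / X < |(q:ℝ) - p*phi| := by
          rw [div_lt_iff₀ hXpos]
          calc (1:ℝ) ≤ |(q:ℝ) - p*phi| * |(q:ℝ) - p*psi| := hprod
            _ < |(q:ℝ) - p*phi| * X := by
                apply mul_lt_mul_of_pos_left hqpsi (abs_pos.mpr hne1)
        have hfin : |(k:ℝ)*alpha - p| = alpha * |(q:ℝ) - p*phi| := by
          rw [hdiff, abs_mul, abs_of_pos alpha_pos]
        rw [hfin]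
        have hgoal : phi ^ (-(r:ℤ)) / Real.sqrt 5 = alpha * (1 / X) := by
          have hz : (phi:ℝ) ^ (-(r:ℤ)) = phi ^ (-1:ℤ) * (phi ^ ((r:ℤ)-1))⁻¹ := by
            rw [show (-(r:ℤ)) = -1 + -((r:ℤ)-1) by ring, zpow_add₀ phi_ne_zero,
              zpow_neg phi ((r:ℤ)-1)]
          have h2 : alpha * Real.sqrt 5 = phi ^ (-1:ℤ) := by rw [alpha_sqrt5, neg_psi_eq]
          rw [hXdef] at hXpos ⊢
          rw [hz, ← h2]
          field_simp
        rw [hgoal]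
        have := alpha_pos
        nlinarith [hstep1]

/-- ⌊y + c⌋ = ⌊y⌋ when y is farther than |c| from every integer. -/
lemma floor_shift {y c : ℝ} (h : ∀ p : ℤ, |c| < |y - p|) : ⌊y + c⌋ = ⌊y⌋ := by
  have h1 := h ⌊y⌋
  have h2 := h (⌊y⌋ + 1)
  have hf1 := Int.floor_le y
  have hf2 := Int.lt_floor_add_one y
  push_cast at h1 h2
  have habs1 : |y - (⌊y⌋:ℝ)| = y - (⌊y⌋:ℝ) := abs_of_nonneg (by linarith)
  have habs2 : |y - ((⌊y⌋:ℝ)+1)| = ((⌊y⌋:ℝ)+1) - y := by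
    rw [abs_sub_comm]
    exact abs_of_nonneg (by linarith)
  rw [habs1] at h1
  rw [habs2] at h2
  apply Int.floor_eq_iff.mpr
  constructor
  · have := neg_abs_le c
    linarith
  · have := le_abs_self c
    push_cast
    linarith

end PhiAux

namespace PhiAux

lemma psi_zpow_fib (i : ℤ) : (psi:ℝ) ^ i + psi ^ (i+1) = psi ^ (i+2) := by
  have a1 : (psi:ℝ) ^ (i+1) = psi ^ i * psi := by
    rw [zpow_add₀ psi_ne_zero, zpow_one]
  have a2 : (psi:ℝ) ^ (i+2) = psi ^ i * psi ^ (2:ℕ) := by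
    rw [zpow_add₀ psi_ne_zero, zpow_ofNat]
  rw [a1, a2]
  linear_combination (-(psi ^ i)) * psi_sq

/-- Lucas · α = fib(k-1) - ψ^k/√5 -/
lemma luc_alpha (k : ℕ) (hk : 1 ≤ k) :
    ((Luc k : ℕ):ℝ) * alpha = ((Nat.fib (k-1) : ℕ):ℝ) - psi ^ (k:ℤ) / Real.sqrt 5 := by
  obtain ⟨j, rfl⟩ : ∃ j, k = j + 1 := ⟨k - 1, by omega⟩
  have hfib : ((Nat.fib (j+1-1) : ℕ):ℝ) = (phi ^ j - psi ^ j) / Real.sqrt 5 := by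
    rw [show j+1-1 = j by omega, phi_eq_gold, psi_eq_goldConj]
    exact Real.coe_fib_eq j
  apply mul_right_cancel₀ sqrt5_ne
  have hz : (psi:ℝ) ^ (((j+1:ℕ)):ℤ) = psi ^ (j+1:ℕ) := by
    rw [← zpow_natCast]
  rw [hz, hfib]
  have hluc : ((Luc (j+1) : ℕ):ℝ) = phi ^ (j+1:ℕ) + psi ^ (j+1:ℕ) := by
    have := luc_binet (j+1)
    rwa [← zpow_natCast phi (j+1), ← zpow_natCast psi (j+1)]
  rw [hluc]
  have hR : ((phi ^ j - psi ^ j) / Real.sqrt 5 - psi ^ (j+1) / Real.sqrt 5) * Real.sqrt 5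
      = phi ^ j - psi ^ j - psi ^ (j+1) := by
    field_simp
  have hL : (phi ^ (j+1) + psi ^ (j+1)) * alpha * Real.sqrt 5
      = (phi ^ (j+1) + psi ^ (j+1)) * (-psi) := by
    rw [mul_assoc, alpha_sqrt5]
  rw [hR, hL]
  linear_combination (-(phi^j)) * phi_mul_psi + (-(psi^j)) * psi_sq

noncomputable def Wfn (N : ℕ) : ℤ := ⌊(N:ℝ) * alpha⌋ - ⌊((N:ℝ) - 1) * alpha⌋

lemma luc_odd_le_phi (t : ℕ) : ((Luc (2*t+1) : ℕ):ℝ) ≤ phi ^ ((2*t+1:ℕ):ℤ) := by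
  rw [luc_binet]
  have : (psi:ℝ) ^ ((2*t+1:ℕ):ℤ) < 0 := by
    rw [psi_zpow_odd ⟨(t:ℤ), by push_cast; ring⟩]
    simp [zpow_phi_pos]
  linarith

lemma luc_even_le_phi_add_one (t : ℕ) : ((Luc (2*t) : ℕ):ℝ) ≤ phi ^ ((2*t:ℕ):ℤ) + 1 := by
  rw [luc_binet]
  have h1 : (psi:ℝ) ^ ((2*t:ℕ):ℤ) = phi ^ (-((2*t:ℕ):ℤ)) := psi_zpow_even ⟨(t:ℤ), by push_cast; ring⟩
  rw [h1]
  have : (phi:ℝ) ^ (-((2*t:ℕ):ℤ)) ≤ phi ^ (0:ℤ) := zpow_phi_le (by omega)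
  simp only [zpow_zero] at this
  linarith

/-- main floor-shift: adding Luc k (k ≥ 2) to x shifts ⌊xα⌋ by fib(k-1), for
1 ≤ x ≤ φ^(k-1). -/
lemma floor_add_luc {k : ℕ} (hk : 2 ≤ k) {x : ℤ} (hx : 1 ≤ x)
    (hxb : (x:ℝ) ≤ phi ^ ((k:ℤ)-1)) :
    ⌊((Luc k : ℕ):ℝ) * alpha + (x:ℝ) * alpha⌋ = (Nat.fib (k-1) : ℤ) + ⌊(x:ℝ) * alpha⌋ := by
  rw [luc_alpha k (by omega)]
  have hmargin : ∀ p:ℤ, |(-(psi ^ (k:ℤ) / Real.sqrt 5))| < |(x:ℝ) * alpha - p| := by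
    intro p
    rw [abs_neg, abs_div, abs_psi_zpow, abs_of_pos sqrt5_pos]
    exact margin hk hx hxb
  have hfs := floor_shift hmargin
  rw [show ((Nat.fib (k-1) : ℕ):ℝ) - psi ^ (k:ℤ) / Real.sqrt 5 + (x:ℝ) * alpha
      = ((x:ℝ) * alpha + (-(psi ^ (k:ℤ) / Real.sqrt 5))) + ((Nat.fib (k-1) : ℤ):ℝ) by
        push_cast; ring]
  rw [Int.floor_add_intCast, hfs]
  ring

/-- Sturmian shift across Lucas numbers -/
lemma Wfn_shift {k : ℕ} (hk : 2 ≤ k) {j : ℕ} (hj : 2 ≤ j)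
    (hjb : (j:ℝ) ≤ phi ^ ((k:ℤ)-1)) :
    Wfn (Luc k + j) = Wfn j := by
  have b1 : (((j:ℤ):ℤ):ℝ) ≤ phi ^ ((k:ℤ)-1) := by exact_mod_cast hjb
  have b2 : ((((j:ℤ) - 1 : ℤ)):ℝ) ≤ phi ^ ((k:ℤ)-1) := by
    push_cast
    linarith [hjb]
  have hz1 := floor_add_luc hk (x := (j:ℤ)) (by omega) b1
  have hz2 := floor_add_luc hk (x := (j:ℤ) - 1) (by omega) b2
  unfold Wfn
  have e1 : ((Luc k + j:ℕ):ℝ) * alpha = ((Luc k : ℕ):ℝ) * alpha + (((j:ℤ):ℤ):ℝ) * alpha := by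
    push_cast; ring
  have e2 : (((Luc k + j:ℕ):ℝ) - 1) * alpha
      = ((Luc k : ℕ):ℝ) * alpha + ((((j:ℤ) - 1 : ℤ)):ℝ) * alpha := by
    push_cast; ring
  rw [e1, e2, hz1, hz2]
  have e3 : ((((j:ℤ) - 1 : ℤ)):ℝ) = ((j:ℕ):ℝ) - 1 := by push_cast; ring
  have e4 : (((j:ℤ):ℤ):ℝ) = ((j:ℕ):ℝ) := by push_cast; ring
  rw [e3, e4]
  ring

end PhiAux

namespace PhiAux

lemma eps_pos (k : ℕ) : 0 < phi ^ (-(k:ℤ)) / Real.sqrt 5 :=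
  div_pos (zpow_phi_pos _) sqrt5_pos

lemma phim2_bound {k : ℕ} (hk : 2 ≤ k) : phi ^ (-(k:ℤ)) < 0.382 :=
  lt_of_le_of_lt (zpow_phi_le (by omega)) phim2_lt

lemma eps_lt {k : ℕ} (hk : 2 ≤ k) : phi ^ (-(k:ℤ)) / Real.sqrt 5 < 0.171 := by
  rw [div_lt_iff₀ sqrt5_pos]
  have h1 := phim2_bound hk
  nlinarith [sqrt5_gt]

lemma eps_lt_alpha {k : ℕ} (hk : 2 ≤ k) : phi ^ (-(k:ℤ)) / Real.sqrt 5 < alpha := by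
  rw [div_lt_iff₀ sqrt5_pos]
  have h1 : (phi:ℝ) ^ (-(k:ℤ)) ≤ phi ^ (-2:ℤ) := zpow_phi_le (by omega)
  have h2 : (phi:ℝ) ^ (-2:ℤ) < phi ^ (-1:ℤ) := zpow_phi_lt (by norm_num)
  have h3 : alpha * Real.sqrt 5 = phi ^ (-1:ℤ) := by rw [alpha_sqrt5, neg_psi_eq]
  rw [h3]
  linarith

lemma luc_alpha_even {m : ℕ} (hm : 1 ≤ m) :
    ((Luc (2*m) : ℕ):ℝ) * alpha
      = ((Nat.fib (2*m-1) : ℕ):ℝ) - phi ^ (-((2*m:ℕ):ℤ)) / Real.sqrt 5 := by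
  rw [luc_alpha (2*m) (by omega)]
  rw [psi_zpow_even ⟨(m:ℤ), by push_cast; ring⟩]

lemma luc_alpha_odd (m : ℕ) :
    ((Luc (2*m+1) : ℕ):ℝ) * alpha
      = ((Nat.fib (2*m) : ℕ):ℝ) + phi ^ (-((2*m+1:ℕ):ℤ)) / Real.sqrt 5 := by
  rw [luc_alpha (2*m+1) (by omega)]
  rw [psi_zpow_odd ⟨(m:ℤ), by push_cast; ring⟩]
  rw [show 2*m+1-1 = 2*m by omega]
  ring

lemma floor_sub_eps (f : ℕ) {e : ℝ} (h1 : 0 < e) (h2 : e ≤ 1) : ⌊(f:ℝ) - e⌋ = (f:ℤ) - 1 := by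
  apply Int.floor_eq_iff.mpr
  constructor
  · push_cast; linarith
  · push_cast; linarith

lemma floor_add_eps (f : ℕ) {e : ℝ} (h1 : 0 ≤ e) (h2 : e < 1) : ⌊(f:ℝ) + e⌋ = (f:ℤ) := by
  apply Int.floor_eq_iff.mpr
  constructor
  · push_cast; linarith
  · push_cast; linarith

lemma Wfn_luc_even {m : ℕ} (hm : 1 ≤ m) : Wfn (Luc (2*m)) = 0 := by
  unfold Wfn
  have hε1 := eps_pos (2*m)
  have hε2 : phi ^ (-((2*m:ℕ):ℤ)) / Real.sqrt 5 < 0.171 := eps_lt (by omega)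
  have hval := luc_alpha_even hm
  have hαg := alpha_gt
  have hαl := alpha_lt
  have e2 : (((Luc (2*m) : ℕ):ℝ) - 1) * alpha
      = ((Nat.fib (2*m-1) : ℕ):ℝ) - (phi ^ (-((2*m:ℕ):ℤ)) / Real.sqrt 5 + alpha) := by
    linear_combination hval
  rw [hval, e2, floor_sub_eps _ hε1 (by linarith),
    floor_sub_eps _ (by linarith) (by linarith)]
  ring

lemma Wfn_luc_even_p1 {m : ℕ} (hm : 1 ≤ m) : Wfn (Luc (2*m) + 1) = 1 := by
  unfold Wfn
  have hε1 := eps_pos (2*m)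
  have hε2 : phi ^ (-((2*m:ℕ):ℤ)) / Real.sqrt 5 < 0.171 := eps_lt (by omega)
  have hε3 : phi ^ (-((2*m:ℕ):ℤ)) / Real.sqrt 5 < alpha := eps_lt_alpha (by omega)
  have hval := luc_alpha_even hm
  have hαg := alpha_gt
  have hαl := alpha_lt
  have e1 : ((Luc (2*m) + 1 : ℕ):ℝ) * alpha
      = ((Nat.fib (2*m-1) : ℕ):ℝ) + (alpha - phi ^ (-((2*m:ℕ):ℤ)) / Real.sqrt 5) := by
    rw [Nat.cast_add, Nat.cast_one]
    linear_combination hval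
  have e2 : (((Luc (2*m) + 1 : ℕ):ℝ) - 1) * alpha
      = ((Nat.fib (2*m-1) : ℕ):ℝ) - phi ^ (-((2*m:ℕ):ℤ)) / Real.sqrt 5 := by
    rw [Nat.cast_add, Nat.cast_one]
    linear_combination hval
  rw [e1, e2, floor_add_eps _ (by linarith) (by linarith),
    floor_sub_eps _ hε1 (by linarith)]
  ring

lemma Wfn_luc_odd_p1 {m : ℕ} (hm : 1 ≤ m) : Wfn (Luc (2*m+1) + 1) = 0 := by
  unfold Wfn
  have hε1 := eps_pos (2*m+1)
  have hε2 : phi ^ (-((2*m+1:ℕ):ℤ)) / Real.sqrt 5 < 0.171 := eps_lt (by omega)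
  have hval := luc_alpha_odd m
  have hαg := alpha_gt
  have hαl := alpha_lt
  have e1 : ((Luc (2*m+1) + 1 : ℕ):ℝ) * alpha
      = ((Nat.fib (2*m) : ℕ):ℝ) + (phi ^ (-((2*m+1:ℕ):ℤ)) / Real.sqrt 5 + alpha) := by
    rw [Nat.cast_add, Nat.cast_one]
    linear_combination hval
  have e2 : (((Luc (2*m+1) + 1 : ℕ):ℝ) - 1) * alpha
      = ((Nat.fib (2*m) : ℕ):ℝ) + phi ^ (-((2*m+1:ℕ):ℤ)) / Real.sqrt 5 := by
    rw [Nat.cast_add, Nat.cast_one]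
    linear_combination hval
  rw [e1, e2, floor_add_eps _ (by linarith) (by linarith),
    floor_add_eps _ (by linarith) (by linarith)]
  ring

lemma Wfn_two : Wfn 2 = 0 := by
  unfold Wfn
  have hαg := alpha_gt
  have hαl := alpha_lt
  have f1 : ⌊((2:ℕ):ℝ) * alpha⌋ = 0 := by
    apply Int.floor_eq_iff.mpr
    constructor
    · push_cast; linarith
    · push_cast; linarith
  have f2 : ⌊(((2:ℕ):ℝ) - 1) * alpha⌋ = 0 := by
    apply Int.floor_eq_iff.mpr
    constructor
    · push_cast; linarith
    · push_cast; linarith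
  rw [f1, f2]
  ring

end PhiAux

namespace PhiAux

/-- chain of "odd" positions b+1, b+3, ..., b+2c-1 -/
def chain (b : ℤ) (c : ℕ) : Finset ℤ := (Finset.range c).image (fun t : ℕ => b + 2*(t:ℤ) + 1)

lemma chain_mem {b : ℤ} {c : ℕ} {i : ℤ} :
    i ∈ chain b c ↔ ∃ t : ℕ, t < c ∧ i = b + 2*(t:ℤ) + 1 := by
  unfold chain
  simp only [Finset.mem_image, Finset.mem_range]
  constructor
  · rintro ⟨t, ht, rfl⟩; exact ⟨t, ht, rfl⟩
  · rintro ⟨t, ht, rfl⟩; exact ⟨t, ht, rfl⟩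

lemma chain_sf (b : ℤ) : ∀ c : ℕ, sf (chain b c) = phi ^ (b + 2*(c:ℤ)) - phi ^ b := by
  intro c
  induction c with
  | zero =>
    have : chain b 0 = ∅ := by unfold chain; simp
    rw [this, sf_empty]
    norm_num
  | succ n ih =>
    have hstep : chain b (n+1) = insert (b + 2*(n:ℤ) + 1) (chain b n) := by
      unfold chain
      rw [Finset.range_add_one, Finset.image_insert]
    have hnotmem : (b + 2*(n:ℤ) + 1) ∉ chain b n := by
      rw [chain_mem]
      rintro ⟨t, ht, heq⟩
      omega
    rw [hstep, sf, Finset.sum_insert hnotmem, ← sf, ih]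
    have hfib := phi_zpow_fib (b + 2*(n:ℤ))
    push_cast
    have e1 : b + 2*((n:ℤ)+1) = (b + 2*(n:ℤ)) + 2 := by ring
    rw [e1, ← hfib]
    ring

lemma sf_union_pair {S : Finset ℤ} {a b : ℤ} (ha : a ∉ S) (hb : b ∉ S) (hab : a ≠ b) :
    sf (S ∪ {a, b}) = sf S + phi ^ a + phi ^ b := by
  rw [sf, Finset.sum_union (by
    rw [Finset.disjoint_right]
    intro x hx
    simp only [Finset.mem_insert, Finset.mem_singleton] at hx
    rcases hx with rfl | rfl
    · exact ha
    · exact hb)]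
  rw [Finset.sum_pair hab, ← sf]
  ring

/-- Lucas numbers in terms of φ only -/
lemma luc_even_phi (m : ℕ) :
    ((Luc (2*m) : ℕ):ℝ) = phi ^ ((2*m:ℕ):ℤ) + phi ^ (-((2*m:ℕ):ℤ)) := by
  rw [luc_binet, psi_zpow_even ⟨(m:ℤ), by push_cast; ring⟩]

lemma luc_odd_phi (m : ℕ) :
    ((Luc (2*m+1) : ℕ):ℝ) = phi ^ ((2*m+1:ℕ):ℤ) - phi ^ (-((2*m+1:ℕ):ℤ)) := by
  rw [luc_binet, psi_zpow_odd ⟨(m:ℤ), by push_cast; ring⟩]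
  ring

section WithD

variable {d : ℕ → ℤ →₀ ℕ} (hd : ∀ n : ℕ, IsCanonRep n (d n))

include hd

lemma supp_nonempty {N : ℕ} (hN : 1 ≤ N) : (d N).support.Nonempty := by
  rcases Finset.eq_empty_or_nonempty (d N).support with h | h
  · exfalso
    have := supp_sf hd N
    rw [h, sf_empty] at this
    have : (N:ℝ) = 0 := this.symm
    have : N = 0 := by exact_mod_cast this
    omega
  · exact h

lemma supp_le_of_lt {N : ℕ} {t : ℤ} (hbound : (N:ℝ) < phi ^ (t+1)) :
    ∀ i ∈ (d N).support, i ≤ t := by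
  intro i hi
  have h1 : phi ^ i ≤ (N:ℝ) := by
    rw [← supp_sf hd N]
    exact sf_single_le hi
  have : (phi:ℝ) ^ i < phi ^ (t+1) := lt_of_le_of_lt h1 hbound
  have := zpow_phi_lt_iff.mp this
  omega

/-- min of support for N ≥ 2: even, negative, and φ^(-ℓ-1) < N -/
lemma supp_min_props {N : ℕ} (hN : 2 ≤ N) :
    ∃ hne : (d N).support.Nonempty,
      Even ((d N).support.min' hne) ∧ ((d N).support.min' hne) < 0 ∧
        phi ^ (-((d N).support.min' hne) - 1) < (N:ℝ) := by
  have hne := supp_nonempty hd (by omega : 1 ≤ N)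
  refine ⟨hne, ?_⟩
  have h := min_props (supp_na hd N) (n := (N:ℤ)) (by exact_mod_cast (by omega : 1 ≤ N))
    (by rw [supp_sf hd N]; push_cast; ring) hne
  obtain ⟨heven, hle, hzero, hneg⟩ := h
  have hltz : (d N).support.min' hne < 0 := by
    rcases lt_or_eq_of_le hle with h | h
    · exact h
    · exfalso
      have := hzero h
      omega
  refine ⟨heven, hltz, ?_⟩
  have := hneg hltz
  exact_mod_cast this

/-- Even structural step: digits of Luc(2m) + j for 2 ≤ j ≤ Luc(2m-1). -/
lemma even_struct {m j : ℕ} (hm : 1 ≤ m) (hj2 : 2 ≤ j) (hjb : j ≤ Luc (2*m-1)) :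
    (d (Luc (2*m) + j)).support
      = (d j).support ∪ {((2*m:ℕ):ℤ), -((2*m:ℕ):ℤ)} := by
  set S := (d j).support with hS
  have hNA : NA S := supp_na hd j
  have hsf : sf S = (j:ℝ) := supp_sf hd j
  -- upper bound on elements of S
  have hlucb : ((Luc (2*m-1) : ℕ):ℝ) < phi ^ (((2*m:ℕ):ℤ) - 1) := by
    have h1 : 2*m-1 = 2*(m-1)+1 := by omega
    rw [h1, luc_binet]
    have heq : ((2*(m-1)+1:ℕ):ℤ) = ((2*m:ℕ):ℤ) - 1 := by push_cast; omega
    rw [heq]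
    have : (psi:ℝ) ^ (((2*(m-1)+1:ℕ)):ℤ) < 0 := by
      rw [psi_zpow_odd ⟨((m-1:ℕ):ℤ), by push_cast; omega⟩]
      simp [zpow_phi_pos]
    have h2 : (psi:ℝ) ^ (((2*(m-1)+1:ℕ)):ℤ) = psi ^ (((2*m:ℕ):ℤ) - 1) := by
      rw [heq]
    rw [h2] at this
    linarith
  have hjR : (j:ℝ) ≤ ((Luc (2*m-1) : ℕ):ℝ) := by exact_mod_cast hjb
  have hmax : ∀ i ∈ S, i ≤ ((2*m:ℕ):ℤ) - 2 := by
    have := supp_le_of_lt hd (N := j) (t := ((2*m:ℕ):ℤ) - 2)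
      (by rw [show ((2*m:ℕ):ℤ) - 2 + 1 = ((2*m:ℕ):ℤ) - 1 by ring]; linarith)
    exact this
  -- lower bound
  obtain ⟨hne, heven, hneg, hphi⟩ := supp_min_props hd (N := j) hj2
  set l := S.min' hne with hldef
  have hlb : -(((2*m:ℕ):ℤ) - 2) ≤ l := by
    by_contra hcon
    push_neg at hcon
    obtain ⟨r, hr⟩ := heven
    have h1 : ((2*m:ℕ):ℤ) - 1 ≤ -l - 1 := by omega
    have h2 : (phi:ℝ) ^ (((2*m:ℕ):ℤ) - 1) ≤ phi ^ (-l - 1) := zpow_phi_le h1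
    have h3 : (phi:ℝ) ^ (-l-1) < (j:ℝ) := hphi
    linarith [hlucb, hjR]
  have hmin : ∀ i ∈ S, -(((2*m:ℕ):ℤ) - 2) ≤ i := by
    intro i hi
    have := S.min'_le i hi
    omega
  -- the candidate set
  have hM2 : (2:ℤ) ≤ ((2*m:ℕ):ℤ) := by push_cast; omega
  have hanotS : ((2*m:ℕ):ℤ) ∉ S := by
    intro h
    have := hmax _ h
    omega
  have hbnotS : -((2*m:ℕ):ℤ) ∉ S := by
    intro h
    have := hmin _ h
    omega
  have hab : ((2*m:ℕ):ℤ) ≠ -((2*m:ℕ):ℤ) := by omega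
  have hsum : sf (S ∪ {((2*m:ℕ):ℤ), -((2*m:ℕ):ℤ)}) = ((Luc (2*m) + j : ℕ):ℝ) := by
    rw [sf_union_pair hanotS hbnotS hab, hsf, Nat.cast_add, luc_even_phi m]
    ring
  have hNA2 : NA (S ∪ {((2*m:ℕ):ℤ), -((2*m:ℕ):ℤ)}) := by
    intro i hi hmem
    simp only [Finset.mem_union, Finset.mem_insert, Finset.mem_singleton] at hi hmem
    rcases hi with hi | hi | hi
    · rcases hmem with hmem | hmem | hmem
      · exact hNA i hi hmem
      · have := hmax i hi; omega
      · have := hmin i hi; omega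
    · rcases hmem with hmem | hmem | hmem
      · have := hmax _ hmem; omega
      · omega
      · omega
    · rcases hmem with hmem | hmem | hmem
      · have := hmin _ hmem; omega
      · omega
      · omega
  exact supp_eq hd _ _ hNA2 hsum

lemma even_struct_d0 {m j : ℕ} (hm : 1 ≤ m) (hj2 : 2 ≤ j) (hjb : j ≤ Luc (2*m-1)) :
    ((d (Luc (2*m) + j)) 0 : ℤ) = ((d j) 0 : ℤ) := by
  rw [d_val_eq_ite hd, d_val_eq_ite hd, even_struct hd hm hj2 hjb]
  have hM2 : (2:ℤ) ≤ ((2*m:ℕ):ℤ) := by push_cast; omega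
  by_cases h : (0:ℤ) ∈ (d j).support
  · rw [if_pos h, if_pos (Finset.mem_union_left _ h)]
  · rw [if_neg h, if_neg (by
      intro hc
      rcases Finset.mem_union.mp hc with hc | hc
      · exact h hc
      · simp only [Finset.mem_insert, Finset.mem_singleton] at hc
        omega)]

end WithD

end PhiAux

namespace PhiAux

lemma luc_even_lt (m : ℕ) (hm : 1 ≤ m) :
    ((Luc (2*m) : ℕ):ℝ) < phi ^ ((2*m:ℕ):ℤ) + 1 := by
  rw [luc_even_phi m]
  have : (phi:ℝ) ^ (-((2*m:ℕ):ℤ)) < phi ^ (0:ℤ) := zpow_phi_lt (by push_cast; omega)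
  simp only [zpow_zero] at this
  linarith

section WithD

variable {d : ℕ → ℤ →₀ ℕ} (hd : ∀ n : ℕ, IsCanonRep n (d n))

include hd

lemma d0_two : ((d 2) 0 : ℤ) = 0 := by
  have hT : (d 2).support = ({1, -2} : Finset ℤ) := by
    apply supp_eq hd
    · intro i hi hmem
      simp only [Finset.mem_insert, Finset.mem_singleton] at hi hmem
      omega
    · rw [sf]
      rw [Finset.sum_pair (by norm_num : (1:ℤ) ≠ -2)]
      have h1 : (phi:ℝ) ^ (1:ℤ) = phi := zpow_one phi
      have h2 : (phi:ℝ) ^ (-2:ℤ) * phi ^ (2:ℤ) = 1 := phi_zpow_neg_mul 2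
      have h3 : (phi:ℝ) ^ (2:ℤ) = phi ^ (2:ℕ) := by rw [zpow_ofNat]
      have h4 := phi_sq
      rw [h1]
      have hpos : (0:ℝ) < phi + 1 := by have := phi_pos; linarith
      have : (phi:ℝ) ^ (-2:ℤ) = 2 - phi := by
        rw [h3, h4] at h2
        have hgt := phi_gt
        have hlt := phi_lt
        nlinarith
      rw [this]
      push_cast
      ring
  rw [d_val_eq_ite hd, hT]
  norm_num

lemma d0_luc_even {m : ℕ} (hm : 1 ≤ m) : ((d (Luc (2*m))) 0 : ℤ) = 0 := by
  have hM2 : (2:ℤ) ≤ ((2*m:ℕ):ℤ) := by push_cast; omega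
  have hT : (d (Luc (2*m))).support = ({((2*m:ℕ):ℤ), -((2*m:ℕ):ℤ)} : Finset ℤ) := by
    apply supp_eq hd
    · intro i hi hmem
      simp only [Finset.mem_insert, Finset.mem_singleton] at hi hmem
      omega
    · rw [sf, Finset.sum_pair (by omega : ((2*m:ℕ):ℤ) ≠ -((2*m:ℕ):ℤ)), luc_even_phi m]
  rw [d_val_eq_ite hd, hT]
  rw [if_neg (by simp only [Finset.mem_insert, Finset.mem_singleton]; omega)]

lemma d0_luc_even_p1 {m : ℕ} (hm : 1 ≤ m) : ((d (Luc (2*m) + 1)) 0 : ℤ) = 1 := by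
  have hM2 : (2:ℤ) ≤ ((2*m:ℕ):ℤ) := by push_cast; omega
  have hT : (d (Luc (2*m) + 1)).support
      = ({((2*m:ℕ):ℤ), 0, -((2*m:ℕ):ℤ)} : Finset ℤ) := by
    apply supp_eq hd
    · intro i hi hmem
      simp only [Finset.mem_insert, Finset.mem_singleton] at hi hmem
      omega
    · rw [sf]
      have h1 : ((2*m:ℕ):ℤ) ∉ ({0, -((2*m:ℕ):ℤ)} : Finset ℤ) := by
        simp only [Finset.mem_insert, Finset.mem_singleton]; omega
      rw [Finset.sum_insert h1, Finset.sum_pair (by omega : (0:ℤ) ≠ -((2*m:ℕ):ℤ))]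
      rw [Nat.cast_add, Nat.cast_one, luc_even_phi m, zpow_zero]
      ring
  rw [d_val_eq_ite hd, hT]
  rw [if_pos (by simp only [Finset.mem_insert, Finset.mem_singleton]; tauto)]

lemma d0_luc_odd_p1 {m : ℕ} (hm : 1 ≤ m) : ((d (Luc (2*m+1) + 1)) 0 : ℤ) = 0 := by
  set a : ℤ := 2*(m:ℤ)+1 with ha
  set b : ℤ := -(2*(m:ℤ))-2 with hb
  have hchain : ∀ i ∈ chain (-(2*(m:ℤ))) m, ∃ t:ℕ, (t:ℤ) < m ∧ i = -(2*(m:ℤ)) + 2*(t:ℤ)+1 := by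
    intro i hi
    obtain ⟨t, ht, rfl⟩ := chain_mem.mp hi
    exact ⟨t, by exact_mod_cast ht, by ring⟩
  have hT : (d (Luc (2*m+1) + 1)).support
      = insert a (insert b (chain (-(2*(m:ℤ))) m)) := by
    apply supp_eq hd
    · -- NA
      intro i hi hmem
      simp only [Finset.mem_insert] at hi hmem
      rcases hi with rfl | rfl | hi
      · rcases hmem with h | h | h
        · omega
        · omega
        · obtain ⟨t, ht, heq⟩ := hchain _ h; omega
      · rcases hmem with h | h | h
        · omega
        · omega
        · obtain ⟨t, ht, heq⟩ := hchain _ h; omega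
      · obtain ⟨t, ht, heq⟩ := hchain _ hi
        rcases hmem with h | h | h
        · omega
        · omega
        · obtain ⟨s, hs, heq2⟩ := hchain _ h; omega
    · -- sum
      have h1 : a ∉ insert b (chain (-(2*(m:ℤ))) m) := by
        simp only [Finset.mem_insert]
        rintro (h | h)
        · omega
        · obtain ⟨t, ht, heq⟩ := hchain _ h; omega
      have h2 : b ∉ chain (-(2*(m:ℤ))) m := by
        intro h
        obtain ⟨t, ht, heq⟩ := hchain _ h; omega
      rw [sf, Finset.sum_insert h1, Finset.sum_insert h2, ← sf, chain_sf]
      rw [show -(2*(m:ℤ)) + 2*(m:ℤ) = 0 by ring, zpow_zero]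
      have hluc := luc_odd_phi m
      rw [show ((2*m+1:ℕ):ℤ) = a by push_cast; ring] at hluc
      rw [show -a = -(2*(m:ℤ))-1 by push_cast; ring] at hluc
      have hfib := phi_zpow_fib (-(2*(m:ℤ))-2)
      rw [show -(2*(m:ℤ))-2+1 = -(2*(m:ℤ))-1 by ring,
        show -(2*(m:ℤ))-2+2 = -(2*(m:ℤ)) by ring] at hfib
      push_cast
      rw [hluc]
      rw [show (-(2*(m:ℤ))-2) = b by rw [hb]] at hfib
      linarith [hfib]
  rw [d_val_eq_ite hd, hT]
  rw [if_neg (by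
    simp only [Finset.mem_insert]
    rintro (h | h | h)
    · omega
    · omega
    · obtain ⟨t, ht, heq⟩ := hchain _ h; omega)]

end WithD

end PhiAux

namespace PhiAux

section WithD

variable {d : ℕ → ℤ →₀ ℕ} (hd : ∀ n : ℕ, IsCanonRep n (d n))

include hd

lemma odd_struct_d0 {m j : ℕ} (hm : 1 ≤ m) (hj2 : 2 ≤ j) (hjb : j ≤ Luc (2*m) - 1) :
    ((d (Luc (2*m+1) + j)) 0 : ℤ) = ((d j) 0 : ℤ) := by
  set S := (d j).support with hS
  have hNA : NA S := supp_na hd j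
  have hsf : sf S = (j:ℝ) := supp_sf hd j
  -- upper bound on support of j : i ≤ 2m - 1
  have hjR : (j:ℝ) < phi ^ ((2*m:ℕ):ℤ) := by
    have h1 : ((Luc (2*m) : ℕ):ℝ) < phi ^ ((2*m:ℕ):ℤ) + 1 := luc_even_lt m hm
    have h2 : (j:ℝ) ≤ ((Luc (2*m) : ℕ):ℝ) - 1 := by
      have hl := luc_pos (2*m)
      have : (j:ℕ) ≤ Luc (2*m) - 1 := hjb
      have := (Nat.cast_le (α := ℝ)).mpr this
      push_cast [Nat.cast_sub hl] at this ⊢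
      linarith
    linarith
  have hmax : ∀ i ∈ S, i ≤ ((2*m:ℕ):ℤ) - 1 := by
    apply supp_le_of_lt hd
    rw [show ((2*m:ℕ):ℤ) - 1 + 1 = ((2*m:ℕ):ℤ) by ring]
    exact hjR
  -- min props
  obtain ⟨hne, heven, hneg, hphi⟩ := supp_min_props hd (N := j) hj2
  set l := S.min' hne with hldef
  obtain ⟨r, hr⟩ := heven
  have hlb : -(2*(m:ℤ)) ≤ l := by
    by_contra hcon
    push_neg at hcon
    have h1 : ((2*m:ℕ):ℤ) ≤ -l - 1 := by push_cast; omega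
    have h2 : (phi:ℝ) ^ (((2*m:ℕ)):ℤ) ≤ phi ^ (-l - 1) := zpow_phi_le h1
    linarith [hphi]
  have herase : ∀ i ∈ S.erase l, l + 2 ≤ i := erase_min_lb hNA hne
  have heraseub : ∀ i ∈ S.erase l, i ≤ ((2*m:ℕ):ℤ) - 1 :=
    fun i hi => hmax i (Finset.mem_of_mem_erase hi)
  obtain ⟨c, hc⟩ : ∃ c : ℕ, (c:ℤ)*2 = l + 2*(m:ℤ) := ⟨(r + (m:ℤ)).toNat, by omega⟩
  have hchain : ∀ i ∈ chain (-(2*(m:ℤ))) c, ∃ t:ℕ, (t:ℤ) < c ∧ i = -(2*(m:ℤ)) + 2*(t:ℤ)+1 := by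
    intro i hi
    obtain ⟨t, ht, rfl⟩ := chain_mem.mp hi
    exact ⟨t, by exact_mod_cast ht, by ring⟩
  set a : ℤ := 2*(m:ℤ)+1 with ha
  set b : ℤ := -(2*(m:ℤ))-2 with hb
  have hcast2m : ((2*m:ℕ):ℤ) = 2*(m:ℤ) := by push_cast; ring
  rw [hcast2m] at hmax heraseub
  have hT : (d (Luc (2*m+1) + j)).support
      = insert a (insert b ((S.erase l) ∪ chain (-(2*(m:ℤ))) c)) := by
    apply supp_eq hd
    · -- NA
      intro i hi hmem
      simp only [Finset.mem_insert, Finset.mem_union] at hi hmem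
      rcases hi with rfl | rfl | hi | hi
      · rcases hmem with h | h | h | h
        · omega
        · omega
        · have := heraseub _ h; omega
        · obtain ⟨t, ht, heq⟩ := hchain _ h; omega
      · rcases hmem with h | h | h | h
        · omega
        · omega
        · have := herase _ h; omega
        · obtain ⟨t, ht, heq⟩ := hchain _ h; omega
      · -- i in erase
        have hi1 := herase _ hi
        have hi2 := heraseub _ hi
        rcases hmem with h | h | h | h
        · omega
        · omega
        · exact hNA i (Finset.mem_of_mem_erase hi) (Finset.mem_of_mem_erase h)
        · obtain ⟨t, ht, heq⟩ := hchain _ h; omega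
      · -- i in chain
        obtain ⟨t, ht, heq⟩ := hchain _ hi
        rcases hmem with h | h | h | h
        · omega
        · omega
        · have := herase _ h; omega
        · obtain ⟨s, hs, heq2⟩ := hchain _ h; omega
    · -- sum
      have h1 : a ∉ insert b ((S.erase l) ∪ chain (-(2*(m:ℤ))) c) := by
        simp only [Finset.mem_insert, Finset.mem_union]
        rintro (h | h | h)
        · omega
        · have := heraseub _ h; omega
        · obtain ⟨t, ht, heq⟩ := hchain _ h; omega
      have h2 : b ∉ (S.erase l) ∪ chain (-(2*(m:ℤ))) c := by
        simp only [Finset.mem_union]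
        rintro (h | h)
        · have := herase _ h; omega
        · obtain ⟨t, ht, heq⟩ := hchain _ h; omega
      have h3 : Disjoint (S.erase l) (chain (-(2*(m:ℤ))) c) := by
        rw [Finset.disjoint_left]
        intro x hx hx2
        have := herase _ hx
        obtain ⟨t, ht, heq⟩ := hchain _ hx2
        omega
      rw [sf, Finset.sum_insert h1, Finset.sum_insert h2, Finset.sum_union h3]
      rw [← sf, ← sf, chain_sf]
      have hel : sf (S.erase l) = (j:ℝ) - phi ^ l := by
        have := sf_erase_add (S := S) (i := l) (S.min'_mem hne)
        rw [hsf] at this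
        linarith
      rw [hel]
      rw [show -(2*(m:ℤ)) + 2*(c:ℤ) = l by omega]
      have hluc := luc_odd_phi m
      rw [show ((2*m+1:ℕ):ℤ) = a by push_cast; ring] at hluc
      rw [show -a = -(2*(m:ℤ))-1 by rw [ha]; ring] at hluc
      have hfib := phi_zpow_fib (-(2*(m:ℤ))-2)
      rw [show -(2*(m:ℤ))-2+1 = -(2*(m:ℤ))-1 by ring,
        show -(2*(m:ℤ))-2+2 = -(2*(m:ℤ)) by ring,
        show (-(2*(m:ℤ))-2) = b by rw [hb]] at hfib
      rw [Nat.cast_add, hluc]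
      linarith [hfib]
  -- conclude about digit 0
  rw [d_val_eq_ite hd, d_val_eq_ite hd, hT]
  have hlne0 : l ≠ 0 := by omega
  by_cases h : (0:ℤ) ∈ S
  · rw [if_pos h, if_pos]
    simp only [Finset.mem_insert, Finset.mem_union]
    right; right; left
    exact Finset.mem_erase.mpr ⟨by omega, h⟩
  · rw [if_neg h, if_neg]
    simp only [Finset.mem_insert, Finset.mem_union]
    rintro (hc0 | hc0 | hc0 | hc0)
    · omega
    · omega
    · exact h (Finset.mem_of_mem_erase hc0)
    · obtain ⟨t, ht, heq⟩ := hchain _ hc0; omega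

end WithD

end PhiAux

namespace PhiAux

lemma luc_sub1_lt_phi {m : ℕ} (hm : 1 ≤ m) :
    ((Luc (2*m-1) : ℕ):ℝ) < phi ^ (((2*m:ℕ):ℤ) - 1) := by
  have h1 : 2*m-1 = 2*(m-1)+1 := by omega
  rw [h1, luc_binet]
  have heq : ((2*(m-1)+1:ℕ):ℤ) = ((2*m:ℕ):ℤ) - 1 := by push_cast; omega
  rw [heq]
  have hneg : (psi:ℝ) ^ (((2*(m-1)+1:ℕ)):ℤ) < 0 := by
    rw [psi_zpow_odd ⟨((m-1:ℕ):ℤ), by push_cast; omega⟩]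
    simp [zpow_phi_pos]
  have h2 : (psi:ℝ) ^ (((2*(m-1)+1:ℕ)):ℤ) = psi ^ (((2*m:ℕ):ℤ) - 1) := by rw [heq]
  rw [h2] at hneg
  linarith

section WithD

variable {d : ℕ → ℤ →₀ ℕ} (hd : ∀ n : ℕ, IsCanonRep n (d n))

include hd

lemma main_claim : ∀ N : ℕ, 2 ≤ N → ((d N) 0 : ℤ) = Wfn N := by
  intro N
  induction N using Nat.strong_induction_on with
  | _ N ih =>
    intro hN
    rcases eq_or_lt_of_le hN with h2 | h3
    · rw [← h2]
      rw [d0_two hd, Wfn_two]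
    · have hN3 : 3 ≤ N := h3
      obtain ⟨k, hk2, hlow, hhigh⟩ := luc_partition N hN3
      rcases Nat.even_or_odd k with ⟨m, hkm⟩ | ⟨m, hkm⟩
      · -- even k = 2m
        have hk2m : k = 2*m := by omega
        have hm1 : 1 ≤ m := by omega
        rw [hk2m] at hlow hhigh
        have hLsum : Luc (2*m+1) = Luc (2*m-1) + Luc (2*m) := by
          have := luc_add (2*m-1)
          rwa [show 2*m-1+2 = 2*m+1 by omega, show 2*m-1+1 = 2*m by omega] at this
        set j := N - Luc (2*m) with hj
        have hNj : N = Luc (2*m) + j := by omega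
        have hjlt : j < Luc (2*m-1) := by omega
        match hj2 : j, hNj with
        | 0, hNj =>
          rw [show N = Luc (2*m) by omega]
          rw [d0_luc_even hd hm1, Wfn_luc_even hm1]
        | 1, hNj =>
          rw [show N = Luc (2*m) + 1 by omega]
          rw [d0_luc_even_p1 hd hm1, Wfn_luc_even_p1 hm1]
        | (j'+2), hNj =>
          have hj2' : 2 ≤ j'+2 := by omega
          have hjb : j'+2 ≤ Luc (2*m-1) := by omega
          have hlt : j'+2 < N := by
            have := luc_pos (2*m)
            omega
          have hjR : ((j'+2:ℕ):ℝ) ≤ phi ^ (((2*m:ℕ):ℤ) - 1) := by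
            have h1 : ((j'+2:ℕ):ℝ) ≤ ((Luc (2*m-1) : ℕ):ℝ) := by exact_mod_cast hjb
            have h2 := luc_sub1_lt_phi hm1
            linarith
          rw [hNj]
          rw [even_struct_d0 hd hm1 hj2' hjb, ih _ hlt hj2',
            Wfn_shift (by omega : 2 ≤ 2*m) hj2' hjR]
      · -- odd k = 2m+1
        have hm1 : 1 ≤ m := by omega
        rw [hkm] at hlow hhigh
        by_cases hEq : N = Luc (2*m+1)
        · -- N = Luc(2m+1) = Luc(2m) + Luc(2m-1)
          have hLsum : Luc (2*m+1) = Luc (2*m-1) + Luc (2*m) := by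
            have := luc_add (2*m-1)
            rwa [show 2*m-1+2 = 2*m+1 by omega, show 2*m-1+1 = 2*m by omega] at this
          rcases eq_or_lt_of_le hm1 with hm1' | hm2
          · -- m = 1 : N = Luc 3 = Luc 2 + 1
            rw [hEq, show Luc (2*m+1) = Luc (2*m) + 1 by rw [← hm1']; rfl]
            rw [d0_luc_even_p1 hd hm1, Wfn_luc_even_p1 hm1]
          · -- m ≥ 2 : j = Luc(2m-1) ≥ 2
            have hm2' : 2 ≤ m := hm2
            have hjval : 2 ≤ Luc (2*m-1) := by
              have := luc_ge (2*m-1)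
              omega
            have hjb : Luc (2*m-1) ≤ Luc (2*m-1) := le_refl _
            have hlt : Luc (2*m-1) < N := by
              have := luc_pos (2*m)
              omega
            have hjR : ((Luc (2*m-1):ℕ):ℝ) ≤ phi ^ (((2*m:ℕ):ℤ) - 1) :=
              le_of_lt (luc_sub1_lt_phi hm1)
            rw [show N = Luc (2*m) + Luc (2*m-1) by omega]
            rw [even_struct_d0 hd hm1 hjval hjb, ih _ hlt hjval,
              Wfn_shift (by omega : 2 ≤ 2*m) hjval hjR]
        · -- N > Luc(2m+1)
          have hgt : Luc (2*m+1) < N := lt_of_le_of_ne hlow (fun h => hEq h.symm)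
          have hLsum2 : Luc (2*m+1+1) = Luc (2*m) + Luc (2*m+1) := by
            have := luc_add (2*m)
            rwa [show 2*m+2 = 2*m+1+1 by omega] at this
          set j := N - Luc (2*m+1) with hj
          have hNj : N = Luc (2*m+1) + j := by omega
          have hj1 : 1 ≤ j := by omega
          have hjub : j ≤ Luc (2*m) - 1 := by omega
          match hj2 : j, hNj with
          | 0, hNj => omega
          | 1, hNj =>
            rw [show N = Luc (2*m+1) + 1 by omega]
            rw [d0_luc_odd_p1 hd hm1, Wfn_luc_odd_p1 hm1]
          | (j'+2), hNj =>
            have hj2' : 2 ≤ j'+2 := by omega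
            have hjb : j'+2 ≤ Luc (2*m) - 1 := by omega
            have hlt : j'+2 < N := by
              have := luc_pos (2*m+1)
              omega
            have hjR : ((j'+2:ℕ):ℝ) ≤ phi ^ (((2*m+1:ℕ):ℤ) - 1) := by
              have h1 : ((j'+2:ℕ):ℝ) ≤ ((Luc (2*m) : ℕ):ℝ) - 1 := by
                have hl := luc_pos (2*m)
                have h0 : (j'+2:ℕ) ≤ Luc (2*m) - 1 := hjb
                have := (Nat.cast_le (α := ℝ)).mpr h0
                push_cast [Nat.cast_sub hl] at this ⊢
                linarith
              have h2 := luc_even_lt m hm1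
              have heq2 : (((2*m+1:ℕ):ℤ)) - 1 = ((2*m:ℕ):ℤ) := by push_cast; ring
              rw [heq2]
              linarith
            rw [hNj]
            rw [odd_struct_d0 hd hm1 hj2' hjb, ih _ hlt hj2',
              Wfn_shift (by omega : 2 ≤ 2*m+1) hj2' hjR]

end WithD

end PhiAux

/-- For `n ≥ 1`, the digit of φ⁰ in the canonical φ-representation of `n+1` equals
`w(n)`. Here `d n` denotes the canonical φ-representation of `n`. -/
theorem d0_eq_sturmian
    (d : ℕ → ℤ →₀ ℕ) (hd : ∀ n : ℕ, IsCanonRep n (d n))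
    (n : ℕ) (hn : 1 ≤ n) :
    (d (n + 1) 0 : ℤ) = sturmianW n := by
  have h := PhiAux.main_claim hd (n+1) (by omega)
  rw [h]
  unfold PhiAux.Wfn sturmianW
  have e1 : ((n+1:ℕ):ℝ) = (n:ℝ) + 1 := by push_cast; ring
  rw [e1, show (n:ℝ) + 1 - 1 = (n:ℝ) by ring]
end
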